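/- arXiv:0912.3091 — 9 statements merged into one kernel-verified Lean document; each statement's English description precedes it below -/
import Mathlib

section
/- Let λ > 0 and let V : ℝ → ℝ be a measurable, even, nonnegative function with V(s) ≤ α + β s² for some α, β > 0 (so that all integrals below converge). Then λ² ∫_{-∞}^0 ∫_{-∞}^0 e^{λ s} e^{λ u} (V(s) + V(u) - V(s-u)) ds du = λ ∫_0^∞ e^{-λ s} V(s) ds. -/
open MeasureTheory Real Set Filter Asymptotics Topology

namespace Stmt3Aux

lemma integral_comp_add_right_Ioi' (f : ℝ → ℝ) (x : ℝ) :
    ∫ y in Ioi (0:ℝ), f (y + x) = ∫ t in Ioi x, f t := by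
  have A : MeasurableEmbedding (fun y : ℝ => y + x) :=
    (Homeomorph.addRight x).isClosedEmbedding.measurableEmbedding
  have h := A.setIntegral_map (μ := volume) f (Ioi x)
  rw [map_add_right_eq_self volume x] at h
  have hpre : (fun y : ℝ => y + x) ⁻¹' Ioi x = Ioi 0 := by ext y; simp
  rw [hpre] at h
  exact h.symm

lemma integrableOn_comp_neg_Iic' {f : ℝ → ℝ} {c : ℝ} (hf : IntegrableOn f (Ioi (-c))) :
    IntegrableOn (fun x => f (-x)) (Iic c) := by
  have A : MeasurableEmbedding fun x : ℝ => -x :=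
    (Homeomorph.neg ℝ).isClosedEmbedding.measurableEmbedding
  have hf' : IntegrableOn f (Ici (-c)) := (integrableOn_Ici_iff_integrableOn_Ioi).mpr hf
  have hmap : (volume : Measure ℝ).restrict (Ici (-c)) =
      Measure.map (fun x : ℝ => -x) ((volume : Measure ℝ).restrict (Iic c)) := by
    rw [← Measure.map_neg_eq_self (volume : Measure ℝ)]
    rw [Measure.restrict_map measurable_neg measurableSet_Ici]
    congr 1
    · ext y; simp
  rw [IntegrableOn, hmap] at hf'
  exact (A.integrable_map_iff).mp hf'

lemma integral_exp_neg_mul_Ioi' {c : ℝ} (hc : 0 < c) :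
    ∫ x in Ioi (0:ℝ), exp (-c * x) = 1 / c := by
  have hderiv : ∀ x ∈ Ici (0:ℝ), HasDerivAt (fun x => -exp (-c * x) / c) (exp (-c * x)) x := by
    intro x _
    have := (((hasDerivAt_id x).const_mul c).neg.exp.neg.div_const c)
    simpa [hc.ne'] using this
  have hint : IntegrableOn (fun x : ℝ => exp (-c * x)) (Ioi 0) := exp_neg_integrableOn_Ioi 0 hc
  have htend : Tendsto (fun x : ℝ => -exp (-c * x) / c) atTop (𝓝 (-0 / c)) := by
    refine Tendsto.div_const (Tendsto.neg ?_) _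
    exact tendsto_exp_atBot.comp (tendsto_id.const_mul_atTop_of_neg (neg_neg_iff_pos.2 hc))
  have := integral_Ioi_of_hasDerivAt_of_tendsto' hderiv hint htend
  rw [this]
  simp [hc.ne']
  ring

lemma tendsto_poly_exp {c : ℝ} (hc : 0 < c) (A B : ℝ) :
    Tendsto (fun x : ℝ => (A + B * x ^ 2) * exp (-c * x)) atTop (𝓝 0) := by
  have t1 : Tendsto (fun x : ℝ => exp (-c * x)) atTop (𝓝 0) :=
    tendsto_exp_atBot.comp (tendsto_id.const_mul_atTop_of_neg (neg_neg_iff_pos.2 hc))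
  have t2 : Tendsto (fun x : ℝ => x ^ 2 * exp (-c * x)) atTop (𝓝 0) := by
    have g := tendsto_pow_mul_exp_neg_atTop_nhds_zero 2
    have hcomp := g.comp (tendsto_id.const_mul_atTop hc)
    have heq : (fun x : ℝ => x ^ 2 * exp (-c * x))
        = fun x : ℝ => (1 / c) ^ 2 * ((fun y : ℝ => y ^ 2 * exp (-y)) ((c * x))) := by
      funext x
      simp only [one_div]
      rw [neg_mul]
      field_simp
    rw [heq]
    have h4 := hcomp.const_mul ((1 / c) ^ 2)
    simp only [mul_zero] at h4
    exact h4.congr fun x => by simp [Function.comp]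
  have := (t1.const_mul A).add (t2.const_mul B)
  simp only [mul_zero, add_zero] at this
  refine this.congr fun x => by ring

lemma integrableOn_poly_exp {c : ℝ} (hc : 0 < c) (A B : ℝ) :
    IntegrableOn (fun x : ℝ => (A + B * x ^ 2) * exp (-c * x)) (Ioi 0) := by
  refine integrable_of_isBigO_exp_neg (half_pos hc) (by fun_prop) ?_
  have h1 := tendsto_poly_exp (half_pos hc) A B
  have h2 : (fun x : ℝ => (A + B * x ^ 2) * exp (-(c / 2) * x)) =O[atTop] (fun _ : ℝ => (1 : ℝ)) :=
    h1.isBigO_one ℝ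
  have h3 := h2.mul (isBigO_refl (fun x : ℝ => exp (-(c / 2) * x)) atTop)
  have heq : (fun x : ℝ => (A + B * x ^ 2) * exp (-c * x))
      = fun x : ℝ => ((A + B * x ^ 2) * exp (-(c / 2) * x)) * exp (-(c / 2) * x) := by
    funext x
    rw [mul_assoc, ← Real.exp_add]
    ring_nf
  rw [heq]
  simpa using h3

lemma integrableOn_poly_exp_Iic {c : ℝ} (hc : 0 < c) (A B : ℝ) :
    IntegrableOn (fun s : ℝ => (A + B * s ^ 2) * exp (c * s)) (Iic 0) := by
  have h := integrableOn_comp_neg_Iic' (c := (0:ℝ))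
    (f := fun x : ℝ => (A + B * x ^ 2) * exp (-c * x))
    (by simpa using integrableOn_poly_exp hc A B)
  refine h.congr_fun (fun x _ => ?_) measurableSet_Iic
  simp only [neg_neg, neg_sq]
  rw [show -c * -x = c * x by ring]

lemma integral_exp_mul_Iic' {c : ℝ} (hc : 0 < c) :
    ∫ s in Iic (0:ℝ), exp (c * s) = 1 / c := by
  have h := integral_comp_neg_Ioi (0:ℝ) (fun s : ℝ => exp (c * s))
  rw [neg_zero] at h
  rw [← h, ← integral_exp_neg_mul_Ioi' hc]
  refine setIntegral_congr_fun measurableSet_Ioi (fun x _ => ?_)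
  rw [show c * -x = -c * x by ring]

end Stmt3Aux

open Stmt3Aux

theorem stmt_3 (lam : ℝ) (hlam : 0 < lam) (V : ℝ → ℝ)
    (hmeas : Measurable V) (heven : ∀ s, V (-s) = V s) (hpos : ∀ s, 0 ≤ V s)
    (α β : ℝ) (hα : 0 < α) (hβ : 0 < β) (hbound : ∀ s, V s ≤ α + β * s ^ 2) :
    lam ^ 2 * ∫ s in Set.Iic (0:ℝ), ∫ u in Set.Iic (0:ℝ),
        Real.exp (lam * s) * Real.exp (lam * u) * (V s + V u - V (s - u))
      = lam * ∫ s in Set.Ioi (0:ℝ), Real.exp (-lam * s) * V s := by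
  have hne : lam ≠ 0 := hlam.ne'
  set J : ℝ := ∫ s in Ioi (0:ℝ), Real.exp (-lam * s) * V s with hJdef
  have mexp : ∀ c : ℝ, Measurable fun x : ℝ => exp (c * x) :=
    fun c => Real.measurable_exp.comp (measurable_id.const_mul c)
  -- integrability of exp(-c x) V x on Ioi 0
  have hIoiV : ∀ c : ℝ, 0 < c → IntegrableOn (fun x : ℝ => exp (-c * x) * V x) (Ioi 0) := by
    intro c hc
    refine Integrable.mono (integrableOn_poly_exp hc α β)
      (((mexp (-c)).mul hmeas).aestronglyMeasurable) ?_
    filter_upwards with x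
    have h1 : 0 ≤ exp (-c * x) * V x := mul_nonneg (exp_pos _).le (hpos x)
    have h2 : exp (-c * x) * V x ≤ (α + β * x ^ 2) * exp (-c * x) := by
      rw [mul_comm]
      exact mul_le_mul_of_nonneg_right (hbound x) (exp_pos _).le
    rw [Real.norm_eq_abs, Real.norm_eq_abs, abs_of_nonneg h1]
    exact h2.trans (le_abs_self _)
  -- integrability of exp(c s) V s on Iic 0
  have hIicV : ∀ c : ℝ, 0 < c → IntegrableOn (fun s : ℝ => exp (c * s) * V s) (Iic 0) := by
    intro c hc
    have h0 := integrableOn_comp_neg_Iic' (c := (0:ℝ))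
      (f := fun x : ℝ => exp (-c * x) * V x) (by simpa using hIoiV c hc)
    refine h0.congr_fun (fun x _ => ?_) measurableSet_Iic
    simp [heven]
  have hIicExp : IntegrableOn (fun s : ℝ => exp (lam * s)) (Iic 0) := by
    have := integrableOn_poly_exp_Iic hlam 1 0
    refine this.congr_fun (fun x _ => by simp) measurableSet_Iic
  have hIoiExp : IntegrableOn (fun x : ℝ => exp (-lam * x)) (Ioi 0) :=
    exp_neg_integrableOn_Ioi 0 hlam
  have hval_Iic : ∫ s in Iic (0:ℝ), exp (lam * s) = 1 / lam := integral_exp_mul_Iic' hlam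
  -- reflection of J
  have hJI : (∫ u in Iic (0:ℝ), exp (lam * u) * V u) = J := by
    have h := integral_comp_neg_Ioi (0:ℝ) (fun u : ℝ => exp (lam * u) * V u)
    rw [neg_zero] at h
    rw [← h, hJdef]
    refine setIntegral_congr_fun measurableSet_Ioi (fun x _ => ?_)
    rw [heven x, show lam * -x = -lam * x by ring]
  -- product integrability on Iic 0 × Iic 0
  have HG : Integrable (fun p : ℝ × ℝ => exp (lam * p.1) * exp (lam * p.2) * V (p.1 - p.2))
      ((volume.restrict (Iic 0)).prod (volume.restrict (Iic 0))) := by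
    have hgmeas : Measurable fun p : ℝ × ℝ =>
        exp (lam * p.1) * exp (lam * p.2) * V (p.1 - p.2) :=
      (((mexp lam).comp measurable_fst).mul ((mexp lam).comp measurable_snd)).mul
        (hmeas.comp (measurable_fst.sub measurable_snd))
    refine Integrable.mono
      (g := fun p : ℝ × ℝ => ((α + (2*β) * p.1 ^ 2) * exp (lam * p.1)) * exp (lam * p.2)
        + exp (lam * p.1) * (((0:ℝ) + (2*β) * p.2 ^ 2) * exp (lam * p.2)))
      ?_ hgmeas.aestronglyMeasurable ?_
    · exact (Integrable.mul_prod (integrableOn_poly_exp_Iic hlam α (2*β)) hIicExp).add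
        (Integrable.mul_prod hIicExp (integrableOn_poly_exp_Iic hlam 0 (2*β)))
    · filter_upwards with p
      have key : V (p.1 - p.2) ≤ α + (2*β) * p.1 ^ 2 + (2*β) * p.2 ^ 2 := by
        have := hbound (p.1 - p.2)
        nlinarith [sq_nonneg (p.1 + p.2), hβ.le]
      have h1 : 0 ≤ exp (lam * p.1) * exp (lam * p.2) * V (p.1 - p.2) :=
        mul_nonneg (mul_nonneg (exp_pos _).le (exp_pos _).le) (hpos _)
      rw [Real.norm_eq_abs, Real.norm_eq_abs, abs_of_nonneg h1]
      refine le_trans ?_ (le_abs_self _)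
      calc exp (lam * p.1) * exp (lam * p.2) * V (p.1 - p.2)
          ≤ exp (lam * p.1) * exp (lam * p.2) * (α + (2*β) * p.1 ^ 2 + (2*β) * p.2 ^ 2) :=
            mul_le_mul_of_nonneg_left key (mul_nonneg (exp_pos _).le (exp_pos _).le)
        _ = ((α + (2*β) * p.1 ^ 2) * exp (lam * p.1)) * exp (lam * p.2)
            + exp (lam * p.1) * (((0:ℝ) + (2*β) * p.2 ^ 2) * exp (lam * p.2)) := by ring
  -- product integrability on Ioi 0 × Ioi 0
  have HF : Integrable (fun p : ℝ × ℝ => exp (-lam * p.1) * exp (-lam * p.2) * V (p.2 - p.1))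
      ((volume.restrict (Ioi 0)).prod (volume.restrict (Ioi 0))) := by
    have hgmeas : Measurable fun p : ℝ × ℝ =>
        exp (-lam * p.1) * exp (-lam * p.2) * V (p.2 - p.1) :=
      (((mexp (-lam)).comp measurable_fst).mul ((mexp (-lam)).comp measurable_snd)).mul
        (hmeas.comp (measurable_snd.sub measurable_fst))
    refine Integrable.mono
      (g := fun p : ℝ × ℝ => ((α + (2*β) * p.1 ^ 2) * exp (-lam * p.1)) * exp (-lam * p.2)
        + exp (-lam * p.1) * (((0:ℝ) + (2*β) * p.2 ^ 2) * exp (-lam * p.2)))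
      ?_ hgmeas.aestronglyMeasurable ?_
    · exact (Integrable.mul_prod (integrableOn_poly_exp hlam α (2*β)) hIoiExp).add
        (Integrable.mul_prod hIoiExp (integrableOn_poly_exp hlam 0 (2*β)))
    · filter_upwards with p
      have key : V (p.2 - p.1) ≤ α + (2*β) * p.1 ^ 2 + (2*β) * p.2 ^ 2 := by
        have := hbound (p.2 - p.1)
        nlinarith [sq_nonneg (p.1 + p.2), hβ.le]
      have h1 : 0 ≤ exp (-lam * p.1) * exp (-lam * p.2) * V (p.2 - p.1) :=
        mul_nonneg (mul_nonneg (exp_pos _).le (exp_pos _).le) (hpos _)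
      rw [Real.norm_eq_abs, Real.norm_eq_abs, abs_of_nonneg h1]
      refine le_trans ?_ (le_abs_self _)
      calc exp (-lam * p.1) * exp (-lam * p.2) * V (p.2 - p.1)
          ≤ exp (-lam * p.1) * exp (-lam * p.2) * (α + (2*β) * p.1 ^ 2 + (2*β) * p.2 ^ 2) :=
            mul_le_mul_of_nonneg_left key (mul_nonneg (exp_pos _).le (exp_pos _).le)
        _ = ((α + (2*β) * p.1 ^ 2) * exp (-lam * p.1)) * exp (-lam * p.2)
            + exp (-lam * p.1) * (((0:ℝ) + (2*β) * p.2 ^ 2) * exp (-lam * p.2)) := by ring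
  -- inner integral computation
  have hinner : ∀ s : ℝ,
      (∫ u in Iic (0:ℝ), Real.exp (lam * s) * Real.exp (lam * u) * (V s + V u - V (s - u)))
      = exp (lam * s) * ((1/lam) * V s) + exp (lam * s) * J
        - exp (lam * s) * (∫ u in Iic (0:ℝ), exp (lam * u) * V (s - u)) := by
    intro s
    have ia : Integrable (fun u : ℝ => exp (lam * u) * V s) (volume.restrict (Iic 0)) :=
      hIicExp.mul_const (V s)
    have ib : Integrable (fun u : ℝ => exp (lam * u) * V u) (volume.restrict (Iic 0)) :=
      hIicV lam hlam
    have ic : Integrable (fun u : ℝ => exp (lam * u) * V (s - u)) (volume.restrict (Iic 0)) := by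
      refine Integrable.mono (integrableOn_poly_exp_Iic hlam (α + (2*β)*s^2) (2*β))
        (((mexp lam).mul (hmeas.comp (measurable_const.sub measurable_id))).aestronglyMeasurable) ?_
      filter_upwards with u
      have key : V (s - u) ≤ (α + (2*β)*s^2) + (2*β) * u ^ 2 := by
        have := hbound (s - u)
        nlinarith [sq_nonneg (s + u), hβ.le]
      have h1 : 0 ≤ exp (lam * u) * V (s - u) := mul_nonneg (exp_pos _).le (hpos _)
      rw [Real.norm_eq_abs, Real.norm_eq_abs, abs_of_nonneg h1]
      refine le_trans ?_ (le_abs_self _)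
      calc exp (lam * u) * V (s - u)
          ≤ exp (lam * u) * ((α + (2*β)*s^2) + (2*β) * u ^ 2) :=
            mul_le_mul_of_nonneg_left key (exp_pos _).le
        _ = ((α + (2*β)*s^2) + (2*β) * u ^ 2) * exp (lam * u) := by ring
    have hsplit : ∀ u : ℝ, Real.exp (lam * s) * Real.exp (lam * u) * (V s + V u - V (s - u))
        = exp (lam * s) * ((exp (lam * u) * V s + exp (lam * u) * V u)
            - exp (lam * u) * V (s - u)) := fun u => by ring
    have iab : Integrable (fun u : ℝ => exp (lam * u) * V s + exp (lam * u) * V u)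
        (volume.restrict (Iic 0)) := ia.add ib
    simp only [hsplit]
    rw [integral_const_mul, integral_sub iab ic, integral_add ia ib,
      integral_mul_const, hval_Iic, hJI]
    ring
  -- outer integral
  have houter : (∫ s in Iic (0:ℝ), ∫ u in Iic (0:ℝ),
        Real.exp (lam * s) * Real.exp (lam * u) * (V s + V u - V (s - u)))
      = (1/lam) * J + J * (1/lam)
        - ∫ s in Iic (0:ℝ), exp (lam * s) * (∫ u in Iic (0:ℝ), exp (lam * u) * V (s - u)) := by
    rw [setIntegral_congr_fun measurableSet_Iic (fun s _ => hinner s)]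
    have i1 : Integrable (fun s : ℝ => exp (lam * s) * ((1/lam) * V s))
        (volume.restrict (Iic 0)) := by
      have := (hIicV lam hlam).const_mul (1/lam)
      exact this.congr (Eventually.of_forall fun s => by ring)
    have i2 : Integrable (fun s : ℝ => exp (lam * s) * J) (volume.restrict (Iic 0)) :=
      hIicExp.mul_const J
    have i3 : Integrable
        (fun s : ℝ => exp (lam * s) * (∫ u in Iic (0:ℝ), exp (lam * u) * V (s - u)))
        (volume.restrict (Iic 0)) := by
      have h := HG.integral_prod_left
      refine h.congr (Eventually.of_forall fun s => ?_)
      simp only [mul_assoc]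
      rw [integral_const_mul]
    have i12 : Integrable (fun s : ℝ => exp (lam * s) * ((1/lam) * V s) + exp (lam * s) * J)
        (volume.restrict (Iic 0)) := i1.add i2
    rw [integral_sub i12 i3, integral_add i1 i2]
    have e1 : (∫ s in Iic (0:ℝ), exp (lam * s) * ((1/lam) * V s)) = (1/lam) * J := by
      rw [show (fun s : ℝ => exp (lam * s) * ((1/lam) * V s))
          = fun s : ℝ => (1/lam) * (exp (lam * s) * V s) from funext fun s => by ring]
      rw [integral_const_mul, hJI]
    have e2 : (∫ s in Iic (0:ℝ), exp (lam * s) * J) = J * (1/lam) := by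
      rw [integral_mul_const, hval_Iic]
      ring
    rw [e1, e2]
  -- C = D : reflect both variables
  have hCD : (∫ s in Iic (0:ℝ), exp (lam * s) * (∫ u in Iic (0:ℝ), exp (lam * u) * V (s - u)))
      = ∫ t in Ioi (0:ℝ), ∫ x in Ioi (0:ℝ), exp (-lam * t) * exp (-lam * x) * V (x - t) := by
    have h1 := integral_comp_neg_Ioi (0:ℝ)
      (fun s : ℝ => exp (lam * s) * (∫ u in Iic (0:ℝ), exp (lam * u) * V (s - u)))
    rw [neg_zero] at h1
    rw [← h1]
    refine setIntegral_congr_fun measurableSet_Ioi (fun t _ => ?_)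
    have h2 := integral_comp_neg_Ioi (0:ℝ) (fun u : ℝ => exp (lam * u) * V (-t - u))
    rw [neg_zero] at h2
    rw [← h2, show lam * -t = -lam * t by ring, ← integral_const_mul]
    refine setIntegral_congr_fun measurableSet_Ioi (fun x _ => ?_)
    rw [show (-t - -x) = x - t by ring, show lam * -x = -lam * x by ring]
    ring
  -- D = J / lam
  have hD : (∫ t in Ioi (0:ℝ), ∫ x in Ioi (0:ℝ), exp (-lam * t) * exp (-lam * x) * V (x - t))
      = J / lam := by
    set S1 : Set (ℝ × ℝ) := {q : ℝ × ℝ | q.1 < q.2} with hS1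
    set S2 : Set (ℝ × ℝ) := {q : ℝ × ℝ | q.2 ≤ q.1} with hS2
    have hS1m : MeasurableSet S1 := measurableSet_lt measurable_fst measurable_snd
    have hS2m : MeasurableSet S2 := measurableSet_le measurable_snd measurable_fst
    set Ff : ℝ × ℝ → ℝ := fun p => exp (-lam * p.1) * exp (-lam * p.2) * V (p.2 - p.1) with hFf
    have mF : AEStronglyMeasurable Ff ((volume.restrict (Ioi 0)).prod (volume.restrict (Ioi 0))) :=
      HF.aestronglyMeasurable
    have hG1 : Integrable (fun p : ℝ × ℝ => S1.indicator Ff p)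
        ((volume.restrict (Ioi 0)).prod (volume.restrict (Ioi 0))) := by
      refine Integrable.mono HF (mF.indicator hS1m) ?_
      filter_upwards with p
      exact norm_indicator_le_norm_self Ff p
    have hG2 : Integrable (fun p : ℝ × ℝ => S2.indicator Ff p)
        ((volume.restrict (Ioi 0)).prod (volume.restrict (Ioi 0))) := by
      refine Integrable.mono HF (mF.indicator hS2m) ?_
      filter_upwards with p
      exact norm_indicator_le_norm_self Ff p
    have e1 : (∫ t in Ioi (0:ℝ), ∫ x in Ioi (0:ℝ), exp (-lam * t) * exp (-lam * x) * V (x - t))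
        = ∫ p, Ff p ∂((volume.restrict (Ioi 0)).prod (volume.restrict (Ioi 0))) :=
      (integral_prod Ff HF).symm
    have esplit : (∫ p, Ff p ∂((volume.restrict (Ioi 0)).prod (volume.restrict (Ioi 0))))
        = (∫ p, S1.indicator Ff p ∂((volume.restrict (Ioi 0)).prod (volume.restrict (Ioi 0))))
          + ∫ p, S2.indicator Ff p ∂((volume.restrict (Ioi 0)).prod (volume.restrict (Ioi 0))) := by
      rw [← integral_add hG1 hG2]
      refine integral_congr_ae (Eventually.of_forall fun p => ?_)
      show Ff p = S1.indicator Ff p + S2.indicator Ff p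
      by_cases h : p.1 < p.2
      · rw [Set.indicator_of_mem (show p ∈ S1 from h) Ff,
          Set.indicator_of_notMem (show p ∉ S2 from not_le.mpr h) Ff, add_zero]
      · rw [Set.indicator_of_notMem (show p ∉ S1 from h) Ff,
          Set.indicator_of_mem (show p ∈ S2 from not_lt.mp h) Ff, zero_add]
    have eT1 : (∫ p, S1.indicator Ff p
          ∂((volume.restrict (Ioi 0)).prod (volume.restrict (Ioi 0))))
        = J * (1 / (2*lam)) := by
      rw [integral_prod _ hG1]
      have inner : ∀ t ∈ Ioi (0:ℝ),
          (∫ x in Ioi (0:ℝ), S1.indicator Ff (t, x)) = exp (-(2*lam) * t) * J := by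
        intro t ht
        have step1 : (∫ x in Ioi (0:ℝ), S1.indicator Ff (t, x))
            = ∫ x in Ioi (0:ℝ),
                (Ioi t).indicator (fun x => exp (-lam * t) * exp (-lam * x) * V (x - t)) x := by
          refine setIntegral_congr_fun measurableSet_Ioi (fun x _ => ?_)
          simp [hS1, hFf, Set.indicator_apply, Set.mem_setOf_eq, Set.mem_Ioi]
        rw [step1, integral_indicator measurableSet_Ioi,
          Measure.restrict_restrict measurableSet_Ioi,
          Set.inter_eq_left.mpr (Ioi_subset_Ioi (le_of_lt ht)),
          ← integral_comp_add_right_Ioi' (fun x => exp (-lam * t) * exp (-lam * x) * V (x - t)) t]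
        have step2 : ∀ y ∈ Ioi (0:ℝ),
            exp (-lam * t) * exp (-lam * (y + t)) * V ((y + t) - t)
            = exp (-(2*lam) * t) * (exp (-lam * y) * V y) := by
          intro y _
          rw [show (y + t) - t = y by ring]
          have : exp (-lam * t) * exp (-lam * (y + t)) = exp (-(2*lam) * t) * exp (-lam * y) := by
            rw [← Real.exp_add, ← Real.exp_add]
            congr 1
            ring
          rw [this]
          ring
        rw [setIntegral_congr_fun measurableSet_Ioi step2, integral_const_mul, hJdef]
      rw [setIntegral_congr_fun measurableSet_Ioi inner, integral_mul_const,
        integral_exp_neg_mul_Ioi' (by positivity : (0:ℝ) < 2*lam)]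
      ring
    have eT2 : (∫ p, S2.indicator Ff p
          ∂((volume.restrict (Ioi 0)).prod (volume.restrict (Ioi 0))))
        = J * (1 / (2*lam)) := by
      rw [integral_prod_symm _ hG2]
      have inner : ∀ x ∈ Ioi (0:ℝ),
          (∫ t in Ioi (0:ℝ), S2.indicator Ff (t, x)) = exp (-(2*lam) * x) * J := by
        intro x hx
        have step1 : (∫ t in Ioi (0:ℝ), S2.indicator Ff (t, x))
            = ∫ t in Ioi (0:ℝ),
                (Ici x).indicator (fun t => exp (-lam * t) * exp (-lam * x) * V (x - t)) t := by
          refine setIntegral_congr_fun measurableSet_Ioi (fun t _ => ?_)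
          simp [hS2, hFf, Set.indicator_apply, Set.mem_setOf_eq, Set.mem_Ici]
        have hsub : Ici x ⊆ Ioi (0:ℝ) := fun y hy => mem_Ioi.mpr (lt_of_lt_of_le (mem_Ioi.mp hx) (mem_Ici.mp hy))
        rw [step1, integral_indicator measurableSet_Ici,
          Measure.restrict_restrict measurableSet_Ici,
          Set.inter_eq_left.mpr hsub, integral_Ici_eq_integral_Ioi,
          ← integral_comp_add_right_Ioi' (fun t => exp (-lam * t) * exp (-lam * x) * V (x - t)) x]
        have step2 : ∀ y ∈ Ioi (0:ℝ),
            exp (-lam * (y + x)) * exp (-lam * x) * V (x - (y + x))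
            = exp (-(2*lam) * x) * (exp (-lam * y) * V y) := by
          intro y _
          rw [show x - (y + x) = -y by ring, heven y]
          have : exp (-lam * (y + x)) * exp (-lam * x) = exp (-(2*lam) * x) * exp (-lam * y) := by
            rw [← Real.exp_add, ← Real.exp_add]
            congr 1
            ring
          rw [this]
          ring
        rw [setIntegral_congr_fun measurableSet_Ioi step2, integral_const_mul, hJdef]
      rw [setIntegral_congr_fun measurableSet_Ioi inner, integral_mul_const,
        integral_exp_neg_mul_Ioi' (by positivity : (0:ℝ) < 2*lam)]
      ring
    rw [e1, esplit, eT1, eT2]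
    field_simp
    ring
  rw [houter, hCD, hD]
  field_simp
  ring
end

section
/- Let λ > 0 and let f : ℝ → ℝ be locally integrable, vanishing on (-∞, 0), with f(t) → 0 as t → ∞. Define ψ_f(t) = f(t) - λ e^{-λ t} ∫_{-∞}^t e^{λ s} f(s) ds. Then ∫_0^t ψ_f(s) ds → 0 as t → ∞. -/
open MeasureTheory Real Set Filter

theorem stmt_5 (lam : ℝ) (hlam : 0 < lam) (f ψ : ℝ → ℝ)
    (hf : LocallyIntegrable f volume)
    (hzero : ∀ t < (0:ℝ), f t = 0)
    (hlim : Tendsto f atTop (nhds 0))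
    (hψ : ∀ t : ℝ, ψ t = f t - lam * Real.exp (-lam * t) * ∫ s in Set.Iic t, Real.exp (lam * s) * f s) :
    Tendsto (fun t => ∫ s in (0:ℝ)..t, ψ s) atTop (nhds 0) := by
  set g : ℝ → ℝ := fun s => Real.exp (lam * s) * f s with hgdef
  -- local integrability of g
  have hgli : LocallyIntegrable g volume := by
    rw [MeasureTheory.locallyIntegrable_iff]
    intro k hk
    exact MeasureTheory.IntegrableOn.continuousOn_mul
      ((Real.continuous_exp.comp (continuous_const.mul continuous_id)).continuousOn)
      (hf.integrableOn_isCompact hk) hk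
  have hgInt : ∀ a b : ℝ, IntervalIntegrable g volume a b := fun a b =>
    (hgli.integrableOn_isCompact isCompact_uIcc).intervalIntegrable
  have hfInt : ∀ a b : ℝ, IntervalIntegrable f volume a b := fun a b =>
    (hf.integrableOn_isCompact isCompact_uIcc).intervalIntegrable
  set F : ℝ → ℝ := fun t => ∫ u in (0:ℝ)..t, g u with hFdef
  have hFcont : Continuous F := intervalIntegral.continuous_primitive hgInt 0
  -- g vanishes a.e. off Ioi 0
  have hae : g =ᵐ[volume] (Set.Ioi (0:ℝ)).indicator g := by
    rw [Filter.EventuallyEq, ae_iff]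
    refine measure_mono_null (fun x hx => ?_) (measure_singleton (0:ℝ))
    simp only [Set.mem_setOf_eq] at hx
    simp only [Set.mem_singleton_iff]
    by_contra hx0
    rcases lt_or_gt_of_ne hx0 with h | h
    · exact hx (by simp [hgdef, Set.indicator_of_notMem (by simpa using h.le : x ∉ Set.Ioi (0:ℝ)), hzero x h])
    · exact hx (by simp [Set.indicator_of_mem (Set.mem_Ioi.2 h)])
  have hIic : ∀ t : ℝ, 0 ≤ t → (∫ s in Set.Iic t, g s) = F t := by
    intro t ht
    calc (∫ s in Set.Iic t, g s) = ∫ s in Set.Iic t, (Set.Ioi (0:ℝ)).indicator g s :=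
          setIntegral_congr_ae measurableSet_Iic (hae.mono fun x hx _ => hx)
      _ = ∫ s in Set.Iic t ∩ Set.Ioi 0, g s := by
          rw [setIntegral_indicator measurableSet_Ioi]
      _ = ∫ s in Set.Ioc 0 t, g s := by
          rw [Set.inter_comm, Set.Ioi_inter_Iic]
      _ = F t := (intervalIntegral.integral_of_le ht).symm
  -- the key identity
  have key : ∀ t : ℝ, 0 ≤ t → (∫ s in (0:ℝ)..t, ψ s) = Real.exp (-lam * t) * F t := by
    intro t ht
    set μt := volume.restrict (Set.Ioc (0:ℝ) t) with hμt
    have hgIoc : Integrable g μt :=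
      (hgli.integrableOn_isCompact (isCompact_Icc : IsCompact (Set.Icc (0:ℝ) t))).mono_set
        Set.Ioc_subset_Icc_self
    have hfIoc : Integrable f μt :=
      (hf.integrableOn_isCompact (isCompact_Icc : IsCompact (Set.Icc (0:ℝ) t))).mono_set
        Set.Ioc_subset_Icc_self
    -- inner exponential integral
    have hexp : ∀ u : ℝ, (∫ s in u..t, lam * Real.exp (-lam * s)) =
        Real.exp (-lam * u) - Real.exp (-lam * t) := by
      intro u
      have hd : ∀ s ∈ Set.uIcc u t, HasDerivAt (fun x => -Real.exp (-lam * x))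
          (lam * Real.exp (-lam * s)) s := by
        intro s _
        have h1 : HasDerivAt (fun x : ℝ => -lam * x) (-lam) s := by
          simpa using (hasDerivAt_id s).const_mul (-lam)
        have h2 := ((Real.hasDerivAt_exp (-lam * s)).comp s h1).neg
        exact h2.congr_deriv (by ring)
      have hc : Continuous fun s : ℝ => lam * Real.exp (-lam * s) :=
        continuous_const.mul (Real.continuous_exp.comp (continuous_const.mul continuous_id))
      rw [intervalIntegral.integral_eq_sub_of_hasDerivAt hd (hc.intervalIntegrable u t)]
      ring
    -- Fubini setup
    set K : ℝ → ℝ → ℝ := fun s u => (Set.Iic s).indicator g u * (lam * Real.exp (-lam * s))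
      with hK
    have hcont1 : Continuous fun q : ℝ × ℝ => lam * Real.exp (-lam * q.1) :=
      continuous_const.mul (Real.continuous_exp.comp (continuous_const.mul continuous_fst))
    have hKrepr : (fun q : ℝ × ℝ => K q.1 q.2) =
        {q : ℝ × ℝ | q.2 ≤ q.1}.indicator
          (fun q => g q.2 * (lam * Real.exp (-lam * q.1))) := by
      funext q
      by_cases h : q.2 ≤ q.1
      · simp [hK, Set.indicator_of_mem, h, Set.mem_Iic, Set.mem_setOf_eq]
      · simp [hK, Set.indicator_of_notMem, h, Set.mem_Iic, Set.mem_setOf_eq]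
    have hKmeas : AEStronglyMeasurable (fun q : ℝ × ℝ => K q.1 q.2) (μt.prod μt) := by
      rw [hKrepr]
      exact (((hgIoc.aestronglyMeasurable.comp_snd).mul hcont1.aestronglyMeasurable).indicator
        (measurableSet_le measurable_snd measurable_fst))
    have hKint : Integrable (fun q : ℝ × ℝ => K q.1 q.2) (μt.prod μt) := by
      have hbound : Integrable (fun q : ℝ × ℝ => |g q.2| * lam) (μt.prod μt) := by
        have : Integrable (fun q : ℝ × ℝ => (lam : ℝ) * |g q.2|) (μt.prod μt) :=
          (integrable_const lam).mul_prod hgIoc.abs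
        simpa [mul_comm] using this
      refine hbound.mono' hKmeas ?_
      have hmem : ∀ᵐ q ∂(μt.prod μt), q.1 ∈ Set.Ioc (0:ℝ) t := by
        rw [hμt, Measure.prod_restrict]
        filter_upwards [ae_restrict_mem (measurableSet_Ioc.prod measurableSet_Ioc)] with q hq
        exact hq.1
      filter_upwards [hmem] with q hq
      have h1 : Real.exp (-lam * q.1) ≤ 1 :=
        Real.exp_le_one_iff.2 (by nlinarith [hq.1])
      have h2 : |(Set.Iic q.1).indicator g q.2| ≤ |g q.2| := by
        by_cases h : q.2 ∈ Set.Iic q.1 <;> simp [Set.indicator, h, abs_nonneg]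
      have hepos : (0:ℝ) < Real.exp (-lam * q.1) := Real.exp_pos _
      calc ‖K q.1 q.2‖ = |(Set.Iic q.1).indicator g q.2| * (lam * Real.exp (-lam * q.1)) := by
            rw [hK, Real.norm_eq_abs, abs_mul,
              abs_of_pos (show (0:ℝ) < lam * Real.exp (-lam * q.1) by positivity)]
        _ ≤ |g q.2| * (lam * 1) := by
            apply mul_le_mul h2 (by nlinarith) (by positivity) (abs_nonneg _)
        _ = |g q.2| * lam := by ring
    -- evaluate inner integrals
    have hLHS : ∀ s ∈ Set.Ioc (0:ℝ) t, (∫ u, K s u ∂μt) = lam * Real.exp (-lam * s) * F s := by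
      intro s hs
      calc (∫ u, K s u ∂μt) = (∫ u, (Set.Iic s).indicator g u ∂μt) * (lam * Real.exp (-lam * s)) := by
            rw [hK]; exact integral_mul_const _ _
        _ = (∫ u in Set.Ioc 0 t ∩ Set.Iic s, g u) * (lam * Real.exp (-lam * s)) := by
            rw [hμt, setIntegral_indicator measurableSet_Iic]
        _ = (∫ u in Set.Ioc 0 s, g u) * (lam * Real.exp (-lam * s)) := by
            rw [Set.Ioc_inter_Iic, min_eq_right hs.2]
        _ = lam * Real.exp (-lam * s) * F s := by
            rw [← intervalIntegral.integral_of_le hs.1.le]; ring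
    have hRHS : ∀ u ∈ Set.Ioc (0:ℝ) t, (∫ s, K s u ∂μt) =
        g u * (Real.exp (-lam * u) - Real.exp (-lam * t)) := by
      intro u hu
      have hptwise : ∀ s : ℝ, K s u =
          (Set.Ici u).indicator (fun s' => g u * (lam * Real.exp (-lam * s'))) s := by
        intro s
        by_cases h : u ≤ s
        · simp [hK, Set.indicator_of_mem, Set.mem_Iic.2 h, Set.mem_Ici.2 h, mul_comm]
        · simp [hK, Set.indicator_of_notMem, h, Set.mem_Iic, Set.mem_Ici]
      have hset : Set.Ioc (0:ℝ) t ∩ Set.Ici u = Set.Icc u t := by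
        ext x
        simp only [Set.mem_inter_iff, Set.mem_Ioc, Set.mem_Ici, Set.mem_Icc]
        constructor
        · rintro ⟨⟨_, h2⟩, h3⟩; exact ⟨h3, h2⟩
        · rintro ⟨h1, h2⟩; exact ⟨⟨lt_of_lt_of_le hu.1 h1, h2⟩, h1⟩
      calc (∫ s, K s u ∂μt)
          = ∫ s in Set.Ioc 0 t, (Set.Ici u).indicator
              (fun s' => g u * (lam * Real.exp (-lam * s'))) s := by
            rw [hμt]; exact integral_congr_ae (Filter.Eventually.of_forall fun s => hptwise s)
        _ = ∫ s in Set.Ioc 0 t ∩ Set.Ici u, g u * (lam * Real.exp (-lam * s)) := by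
            rw [setIntegral_indicator measurableSet_Ici]
        _ = ∫ s in Set.Icc u t, g u * (lam * Real.exp (-lam * s)) := by rw [hset]
        _ = ∫ s in u..t, g u * (lam * Real.exp (-lam * s)) := by
            rw [integral_Icc_eq_integral_Ioc, ← intervalIntegral.integral_of_le hu.2]
        _ = g u * ∫ s in u..t, lam * Real.exp (-lam * s) := by
            rw [intervalIntegral.integral_const_mul]
        _ = g u * (Real.exp (-lam * u) - Real.exp (-lam * t)) := by rw [hexp u]
    -- Fubini
    have hgmul : ∀ u : ℝ, g u * Real.exp (-lam * u) = f u := by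
      intro u
      rw [hgdef]
      dsimp only
      rw [mul_comm (Real.exp (lam * u)) (f u), mul_assoc, ← Real.exp_add]
      norm_num
    have hA : (∫ s in Set.Ioc (0:ℝ) t, lam * Real.exp (-lam * s) * F s) =
        (∫ u in Set.Ioc (0:ℝ) t, f u) - Real.exp (-lam * t) * F t := by
      calc (∫ s in Set.Ioc (0:ℝ) t, lam * Real.exp (-lam * s) * F s)
          = ∫ s, (∫ u, K s u ∂μt) ∂μt :=
            (setIntegral_congr_fun measurableSet_Ioc fun s hs => (hLHS s hs).symm :)
        _ = ∫ u, (∫ s, K s u ∂μt) ∂μt := integral_integral_swap hKint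
        _ = ∫ u in Set.Ioc (0:ℝ) t, g u * (Real.exp (-lam * u) - Real.exp (-lam * t)) :=
            setIntegral_congr_fun measurableSet_Ioc fun u hu => hRHS u hu
        _ = ∫ u in Set.Ioc (0:ℝ) t, (f u - Real.exp (-lam * t) * g u) := by
            refine setIntegral_congr_fun measurableSet_Ioc fun u _ => ?_
            have := hgmul u
            rw [mul_sub, this]; ring
        _ = (∫ u in Set.Ioc (0:ℝ) t, f u) - ∫ u in Set.Ioc (0:ℝ) t, Real.exp (-lam * t) * g u :=
            integral_sub hfIoc (hgIoc.const_mul _)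
        _ = (∫ u in Set.Ioc (0:ℝ) t, f u) - Real.exp (-lam * t) * F t := by
            rw [integral_const_mul, hFdef]
            dsimp only
            rw [intervalIntegral.integral_of_le ht]
    have hpsiInt : Integrable (fun s => lam * Real.exp (-lam * s) * F s) μt := by
      have hcont : Continuous fun s : ℝ => lam * Real.exp (-lam * s) * F s :=
        (continuous_const.mul (Real.continuous_exp.comp
          (continuous_const.mul continuous_id))).mul hFcont
      exact (hcont.integrableOn_Ioc :
        IntegrableOn (fun s => lam * Real.exp (-lam * s) * F s) (Set.Ioc 0 t) volume)
    calc (∫ s in (0:ℝ)..t, ψ s) = ∫ s in Set.Ioc (0:ℝ) t, ψ s :=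
          intervalIntegral.integral_of_le ht
      _ = ∫ s in Set.Ioc (0:ℝ) t, (f s - lam * Real.exp (-lam * s) * F s) := by
          refine setIntegral_congr_fun measurableSet_Ioc fun s hs => ?_
          rw [hψ s, hIic s hs.1.le]
      _ = (∫ s in Set.Ioc (0:ℝ) t, f s) - ∫ s in Set.Ioc (0:ℝ) t, lam * Real.exp (-lam * s) * F s :=
          integral_sub hfIoc hpsiInt
      _ = Real.exp (-lam * t) * F t := by rw [hA]; ring
  -- the limit
  have hlimF : Tendsto (fun t => Real.exp (-lam * t) * F t) atTop (nhds 0) := by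
    rw [NormedAddCommGroup.tendsto_nhds_zero]
    intro ε hε
    have hε2 : 0 < lam * ε / 2 := by positivity
    obtain ⟨T0, hT0⟩ := (Metric.tendsto_atTop.mp hlim) (lam * ε / 2) hε2
    set T := max T0 0 with hT
    have hTf : ∀ u : ℝ, T ≤ u → |f u| ≤ lam * ε / 2 := by
      intro u hu
      have := hT0 u (le_trans (le_max_left _ _) hu)
      rw [Real.dist_eq, sub_zero] at this
      exact this.le
    set C := |∫ u in (0:ℝ)..T, g u| with hCdef
    have hC0 : 0 ≤ C := abs_nonneg _
    have hdecay : Tendsto (fun t : ℝ => Real.exp (-lam * t) * C) atTop (nhds 0) := by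
      have h1 : Tendsto (fun t : ℝ => Real.exp (-lam * t)) atTop (nhds 0) := by
        have h2 : Tendsto (fun t : ℝ => lam * t) atTop atTop :=
          (tendsto_const_mul_atTop_of_pos hlam).2 tendsto_id
        exact (Real.tendsto_exp_neg_atTop_nhds_zero.comp h2).congr fun t => by
          simp [Function.comp, neg_mul]
      simpa using h1.mul_const C
    have hev1 : ∀ᶠ t in atTop, Real.exp (-lam * t) * C < ε / 2 :=
      hdecay (Iio_mem_nhds (half_pos hε))
    filter_upwards [hev1, eventually_ge_atTop T] with t h1t h2t
    have hsplit : F t = (∫ u in (0:ℝ)..T, g u) + ∫ u in T..t, g u :=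
      (intervalIntegral.integral_add_adjacent_intervals (hgInt 0 T) (hgInt T t)).symm
    have htail : |∫ u in T..t, g u| ≤ (ε / 2) * Real.exp (lam * t) := by
      have habs : |∫ u in T..t, g u| ≤ ∫ u in T..t, |g u| :=
        intervalIntegral.abs_integral_le_integral_abs h2t
      have hcontexp : Continuous fun u : ℝ => Real.exp (lam * u) :=
        Real.continuous_exp.comp (continuous_const.mul continuous_id)
      have hmono : (∫ u in T..t, |g u|) ≤ ∫ u in T..t, Real.exp (lam * u) * (lam * ε / 2) := by
        apply intervalIntegral.integral_mono_on h2t ((hgInt T t).abs)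
          ((hcontexp.mul continuous_const).intervalIntegrable T t)
        intro u hu
        have hgu : |g u| = Real.exp (lam * u) * |f u| := by
          rw [hgdef]; dsimp only; rw [abs_mul, abs_of_pos (Real.exp_pos _)]
        rw [hgu]
        exact mul_le_mul_of_nonneg_left (hTf u hu.1) (Real.exp_pos _).le
      have hcalc : (∫ u in T..t, Real.exp (lam * u) * (lam * ε / 2)) =
          (Real.exp (lam * t) / lam - Real.exp (lam * T) / lam) * (lam * ε / 2) := by
        rw [intervalIntegral.integral_mul_const]
        congr 1
        have hd : ∀ u ∈ Set.uIcc T t, HasDerivAt (fun x => Real.exp (lam * x) / lam)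
            (Real.exp (lam * u)) u := by
          intro u _
          have h1 : HasDerivAt (fun x : ℝ => lam * x) lam u := by
            simpa using (hasDerivAt_id u).const_mul lam
          have h2 := ((Real.hasDerivAt_exp (lam * u)).comp u h1).div_const lam
          exact h2.congr_deriv (mul_div_cancel_right₀ _ hlam.ne')
        rw [intervalIntegral.integral_eq_sub_of_hasDerivAt hd (hcontexp.intervalIntegrable T t)]
      have hfin : (Real.exp (lam * t) / lam - Real.exp (lam * T) / lam) * (lam * ε / 2) ≤
          (ε / 2) * Real.exp (lam * t) := by
        have h1 : (Real.exp (lam * t) / lam) * (lam * ε / 2) = (ε / 2) * Real.exp (lam * t) := by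
          field_simp
        have h2 : 0 < Real.exp (lam * T) / lam := div_pos (Real.exp_pos _) hlam
        nlinarith
      calc |∫ u in T..t, g u| ≤ ∫ u in T..t, Real.exp (lam * u) * (lam * ε / 2) :=
            le_trans habs hmono
        _ = (Real.exp (lam * t) / lam - Real.exp (lam * T) / lam) * (lam * ε / 2) := hcalc
        _ ≤ (ε / 2) * Real.exp (lam * t) := hfin
    have hbnd : ‖Real.exp (-lam * t) * F t‖ ≤ Real.exp (-lam * t) * C + ε / 2 := by
      have hee : Real.exp (-lam * t) * Real.exp (lam * t) = 1 := by
        rw [← Real.exp_add]; norm_num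
      calc ‖Real.exp (-lam * t) * F t‖ = Real.exp (-lam * t) * |F t| := by
            rw [Real.norm_eq_abs, abs_mul, abs_of_pos (Real.exp_pos _)]
        _ ≤ Real.exp (-lam * t) * (C + |∫ u in T..t, g u|) := by
            apply mul_le_mul_of_nonneg_left _ (Real.exp_pos _).le
            rw [hsplit]
            exact abs_add_le _ _
        _ ≤ Real.exp (-lam * t) * (C + (ε / 2) * Real.exp (lam * t)) := by
            apply mul_le_mul_of_nonneg_left (by linarith) (Real.exp_pos _).le
        _ = Real.exp (-lam * t) * C + (ε / 2) * (Real.exp (-lam * t) * Real.exp (lam * t)) := by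
            ring
        _ = Real.exp (-lam * t) * C + ε / 2 := by rw [hee]; ring
    calc ‖Real.exp (-lam * t) * F t‖ ≤ Real.exp (-lam * t) * C + ε / 2 := hbnd
      _ < ε / 2 + ε / 2 := by linarith
      _ = ε := by ring
  refine hlimF.congr' ?_
  filter_upwards [eventually_ge_atTop (0:ℝ)] with t ht
  exact (key t ht).symm
end

section
/- Let ψ : (0,∞) → ℝ be measurable, c ≠ 0, α ∈ (-1, -1/2). Assume ψ(t)/t^α → c as t → ∞ and |ψ(t)| ≤ c₁ t^α for all t > 0 and some c₁ > 0. Define r(t) = ∫_0^∞ ψ(t+s) ψ(s) ds. Then r(t) / t^{2α+1} → c² · Γ(1+α)Γ(-1-2α)/Γ(-α) as t → ∞. -/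
open MeasureTheory Real Set Filter

lemma real_beta (a b : ℝ) (ha : 0 < a) (hb : 0 < b) :
    ∫ x in (0:ℝ)..1, x ^ (a-1) * (1-x) ^ (b-1)
      = Real.Gamma a * Real.Gamma b / Real.Gamma (a+b) := by
  have h := Complex.Gamma_mul_Gamma_eq_betaIntegral (s := (a:ℂ)) (t := (b:ℂ))
    (by simpa using ha) (by simpa using hb)
  have hbeta : Complex.betaIntegral a b
      = ((∫ x in (0:ℝ)..1, x ^ (a-1) * (1-x) ^ (b-1) : ℝ) : ℂ) := by
    rw [Complex.betaIntegral]
    have step : ∫ x in (0:ℝ)..1, (x:ℂ)^((a:ℂ)-1)*(1-(x:ℂ))^((b:ℂ)-1)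
        = ∫ x in (0:ℝ)..1, ((x^(a-1)*(1-x)^(b-1) : ℝ) : ℂ) := by
      refine intervalIntegral.integral_congr fun x hx => ?_
      rw [uIcc_of_le zero_le_one] at hx
      push_cast
      rw [Complex.ofReal_cpow hx.1, Complex.ofReal_cpow (by linarith [hx.2] : (0:ℝ) ≤ 1 - x)]
      push_cast
      ring
    rw [step]
    exact_mod_cast RCLike.intervalIntegral_ofReal (𝕜 := ℂ)
  rw [hbeta, ← Complex.ofReal_add, Complex.Gamma_ofReal, Complex.Gamma_ofReal,
    Complex.Gamma_ofReal, ← Complex.ofReal_mul, ← Complex.ofReal_mul] at h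
  have h2 := Complex.ofReal_inj.mp h
  have hG : Real.Gamma (a+b) ≠ 0 := (Real.Gamma_pos_of_pos (by linarith)).ne'
  field_simp
  linarith [h2]

lemma subst_beta {α : ℝ} (hα1 : (-1:ℝ) < α) (hα2 : α < -1/2) :
    ∫ u in Ioi (0:ℝ), (1+u)^α * u^α
      = ∫ x in (0:ℝ)..1, x ^ ((1+α)-1) * (1-x) ^ ((-1-2*α)-1) := by
  have himg : (fun x : ℝ => x / (1-x)) '' Ioo 0 1 = Ioi 0 := by
    ext y
    constructor
    · rintro ⟨x, ⟨hx0, hx1⟩, rfl⟩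
      exact div_pos hx0 (by linarith)
    · intro hy
      have hy0 : (0:ℝ) < y := hy
      refine ⟨y / (1+y), ⟨div_pos hy0 (by linarith), ?_⟩, ?_⟩
      · rw [div_lt_one (by linarith)]; linarith
      · field_simp; ring
  have hderiv : ∀ x ∈ Ioo (0:ℝ) 1,
      HasDerivWithinAt (fun x : ℝ => x / (1-x)) (((1-x)^2)⁻¹) (Ioo 0 1) x := by
    intro x hx
    have hne : (1:ℝ) - x ≠ 0 := by rw [Set.mem_Ioo] at hx; intro h; linarith [hx.2]
    have := (hasDerivAt_id x).div ((hasDerivAt_id x).const_sub 1) hne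
    convert this.hasDerivWithinAt using 1
    · rfl
    · rfl
    · rfl
    · simp only [id]; field_simp; ring
  have hinj : InjOn (fun x : ℝ => x / (1-x)) (Ioo 0 1) := by
    intro x hx y hy h
    rw [Set.mem_Ioo] at hx hy
    have hx1 : (1:ℝ) - x ≠ 0 := by intro h'; linarith [hx.2]
    have hy1 : (1:ℝ) - y ≠ 0 := by intro h'; linarith [hy.2]
    field_simp at h
    nlinarith [h]
  have key := integral_image_eq_integral_abs_deriv_smul measurableSet_Ioo hderiv hinj
    (fun u : ℝ => (1+u)^α * u^α)
  rw [himg] at key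
  rw [key, intervalIntegral.integral_of_le zero_le_one, integral_Ioc_eq_integral_Ioo]
  refine setIntegral_congr_fun measurableSet_Ioo fun x hx => ?_
  rw [Set.mem_Ioo] at hx
  have hx0 : (0:ℝ) < x := hx.1
  have h1x : (0:ℝ) < 1 - x := by linarith [hx.2]
  have e1 : 1 + x / (1-x) = (1-x)⁻¹ := by field_simp; ring
  rw [smul_eq_mul, e1, abs_of_pos (by positivity), Real.inv_rpow h1x.le,
    Real.div_rpow hx0.le h1x.le]
  have e2 : ((1+α)-1) = α := by ring
  have e3 : ((-1-2*α)-1) = (-α) + ((-α) + (-2)) := by ring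
  rw [e2, e3, Real.rpow_add h1x, Real.rpow_add h1x, Real.rpow_neg h1x.le,
    Real.rpow_neg h1x.le, show ((2:ℝ)) = ((2:ℕ):ℝ) by norm_num, Real.rpow_natCast]
  have hne : (1-x)^(α:ℝ) ≠ 0 := (Real.rpow_pos_of_pos h1x _).ne'
  have hne2 : ((1:ℝ)-x)^(2:ℕ) ≠ 0 := pow_ne_zero _ (by linarith)
  field_simp

lemma bound_int {α : ℝ} (hα1 : (-1:ℝ) < α) (hα2 : α < -1/2) :
    IntegrableOn (fun u : ℝ => (1+u)^α * u^α) (Ioi (0:ℝ)) := by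
  have hmeas : Measurable fun u : ℝ => (1+u)^α * u^α :=
    ((measurable_const.add measurable_id).pow_const α |>.mul (measurable_id.pow_const α))
  rw [← Ioc_union_Ioi_eq_Ioi (zero_le_one : (0:ℝ) ≤ 1)]
  refine IntegrableOn.union ?_ ?_
  · have hint : IntegrableOn (fun u : ℝ => u^α) (Ioc (0:ℝ) 1) := by
      have h := intervalIntegral.intervalIntegrable_rpow' (a := (0:ℝ)) (b := 1) hα1
      rwa [intervalIntegrable_iff, uIoc_of_le zero_le_one] at h
    refine hint.mono' hmeas.aestronglyMeasurable ?_
    rw [ae_restrict_iff' measurableSet_Ioc]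
    filter_upwards with u hu
    rw [Set.mem_Ioc] at hu
    have h0 : 0 ≤ (1+u)^α * u^α :=
      mul_nonneg (Real.rpow_nonneg (by linarith [hu.1]) α) (Real.rpow_nonneg hu.1.le α)
    rw [Real.norm_eq_abs, abs_of_nonneg h0]
    exact mul_le_of_le_one_left (Real.rpow_nonneg hu.1.le α)
      (Real.rpow_le_one_of_one_le_of_nonpos (by linarith [hu.1]) (by linarith))
  · have hint : IntegrableOn (fun u : ℝ => u^(2*α)) (Ioi (1:ℝ)) :=
      integrableOn_Ioi_rpow_of_lt (by linarith) one_pos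
    refine hint.mono' hmeas.aestronglyMeasurable ?_
    rw [ae_restrict_iff' measurableSet_Ioi]
    filter_upwards with u hu
    have hu1 : (1:ℝ) < u := hu
    have hu0 : (0:ℝ) < u := by linarith
    have h0 : 0 ≤ (1+u)^α * u^α :=
      mul_nonneg (Real.rpow_nonneg (by linarith) α) (Real.rpow_nonneg hu0.le α)
    rw [Real.norm_eq_abs, abs_of_nonneg h0]
    have h1 : (1+u)^α ≤ u^α :=
      Real.rpow_le_rpow_of_nonpos hu0 (by linarith) (by linarith)
    calc (1+u)^α * u^α ≤ u^α * u^α :=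
          mul_le_mul_of_nonneg_right h1 (Real.rpow_nonneg hu0.le α)
      _ = u^(2*α) := by rw [← Real.rpow_add hu0]; ring_nf

theorem stmt_9 (α c c₁ : ℝ) (hα : α ∈ Set.Ioo (-1 : ℝ) (-1/2)) (hc : c ≠ 0) (hc₁ : 0 < c₁)
    (ψ : ℝ → ℝ) (hmeas : Measurable ψ)
    (hlim : Tendsto (fun t => ψ t / t ^ α) atTop (nhds c))
    (hbound : ∀ t > (0:ℝ), |ψ t| ≤ c₁ * t ^ α)
    (r : ℝ → ℝ)
    (hr : ∀ t : ℝ, r t = ∫ s in Set.Ioi (0:ℝ), ψ (t + s) * ψ s) :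
    Tendsto (fun t => r t / t ^ (2 * α + 1)) atTop
      (nhds (c ^ 2 * (Real.Gamma (1 + α) * Real.Gamma (-1 - 2 * α) / Real.Gamma (-α)))) := by
  obtain ⟨hα1, hα2⟩ := hα
  set F : ℝ → ℝ → ℝ := fun t u =>
    (ψ (t*(1+u)) / (t*(1+u))^α) * (ψ (t*u) / (t*u)^α) * ((1+u)^α * u^α) with hF
  -- step 1 : eventual equality
  have hev : ∀ᶠ t in atTop, r t / t^(2*α+1) = ∫ u in Ioi (0:ℝ), F t u := by
    filter_upwards [eventually_gt_atTop (0:ℝ)] with t ht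
    have hscale : (∫ s in Ioi (0:ℝ), ψ (t+s) * ψ s)
        = t * ∫ u in Ioi (0:ℝ), ψ (t + t*u) * ψ (t*u) := by
      have h := integral_comp_mul_left_Ioi (fun s => ψ (t+s) * ψ s) 0 ht
      rw [mul_zero] at h
      rw [h, smul_eq_mul, ← mul_assoc, mul_inv_cancel₀ ht.ne', one_mul]
    have hcong : (∫ u in Ioi (0:ℝ), ψ (t + t*u) * ψ (t*u))
        = ∫ u in Ioi (0:ℝ), t^(2*α) * F t u := by
      refine setIntegral_congr_fun measurableSet_Ioi fun u hu => ?_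
      have hu0 : (0:ℝ) < u := hu
      have h1u : (0:ℝ) < 1 + u := by linarith
      have ha : (t*(1+u))^α = t^α * (1+u)^α := Real.mul_rpow ht.le h1u.le
      have hb : (t*u)^α = t^α * u^α := Real.mul_rpow ht.le hu0.le
      have ht2 : t^(2*α) = t^α * t^α := by
        rw [show 2*α = α+α by ring, Real.rpow_add ht]
      have h1 : t^(α:ℝ) ≠ 0 := (Real.rpow_pos_of_pos ht _).ne'
      have h2 : (1+u)^(α:ℝ) ≠ 0 := (Real.rpow_pos_of_pos h1u _).ne'
      have h3 : u^(α:ℝ) ≠ 0 := (Real.rpow_pos_of_pos hu0 _).ne'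
      have harg : t + t*u = t*(1+u) := by ring
      rw [harg, hF]
      simp only
      rw [ha, hb, ht2]
      field_simp
    rw [hr t, hscale, hcong, MeasureTheory.integral_const_mul]
    have hsplit : t^(2*α+1) = t^(2*α) * t := by
      rw [Real.rpow_add ht, Real.rpow_one]
    rw [hsplit]
    have h4 : t^(2*α:ℝ) ≠ 0 := (Real.rpow_pos_of_pos ht _).ne'
    field_simp
  -- step 2 : dominated convergence
  have hlim2 : Tendsto (fun t => ∫ u in Ioi (0:ℝ), F t u) atTop
      (nhds (∫ u in Ioi (0:ℝ), (c*c) * ((1+u)^α * u^α))) := by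
    refine tendsto_integral_filter_of_dominated_convergence
      (fun u => c₁^2 * ((1+u)^α * u^α)) ?_ ?_ ?_ ?_
    · filter_upwards [eventually_gt_atTop (0:ℝ)] with t ht
      have m1 : Measurable fun u : ℝ => t*(1+u) := by fun_prop
      have m2 : Measurable fun u : ℝ => t*u := by fun_prop
      exact ((((hmeas.comp m1).div (m1.pow_const α)).mul
        ((hmeas.comp m2).div (m2.pow_const α))).mul
        (((measurable_const.add measurable_id).pow_const α).mul
          (measurable_id.pow_const α))).aestronglyMeasurable
    · filter_upwards [eventually_gt_atTop (0:ℝ)] with t ht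
      rw [ae_restrict_iff' measurableSet_Ioi]
      filter_upwards with u hu
      have hu0 : (0:ℝ) < u := hu
      have h1u : (0:ℝ) < 1 + u := by linarith
      have key : ∀ x : ℝ, 0 < x → |ψ x / x^α| ≤ c₁ := fun x hx => by
        rw [abs_div, abs_of_pos (Real.rpow_pos_of_pos hx α),
          div_le_iff₀ (Real.rpow_pos_of_pos hx α)]
        exact hbound x hx
      have hP : 0 ≤ (1+u)^α * u^α :=
        mul_nonneg (Real.rpow_nonneg h1u.le α) (Real.rpow_nonneg hu0.le α)
      have k1 := key _ (mul_pos ht h1u)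
      have k2 := key _ (mul_pos ht hu0)
      rw [hF]
      simp only [Real.norm_eq_abs]
      rw [abs_mul, abs_mul, abs_of_nonneg hP]
      have h5 : |ψ (t*(1+u)) / (t*(1+u))^α| * |ψ (t*u) / (t*u)^α| ≤ c₁ * c₁ :=
        mul_le_mul k1 k2 (abs_nonneg _) hc₁.le
      calc |ψ (t*(1+u)) / (t*(1+u))^α| * |ψ (t*u) / (t*u)^α| * ((1+u)^α * u^α)
          ≤ (c₁ * c₁) * ((1+u)^α * u^α) := mul_le_mul_of_nonneg_right h5 hP
        _ = c₁^2 * ((1+u)^α * u^α) := by ring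
    · exact (bound_int hα1 hα2).const_mul _
    · rw [ae_restrict_iff' measurableSet_Ioi]
      filter_upwards with u hu
      have hu0 : (0:ℝ) < u := hu
      have h1 : Tendsto (fun t : ℝ => t*(1+u)) atTop atTop :=
        Tendsto.atTop_mul_const (by linarith) tendsto_id
      have h2 : Tendsto (fun t : ℝ => t*u) atTop atTop :=
        Tendsto.atTop_mul_const hu0 tendsto_id
      exact ((hlim.comp h1).mul (hlim.comp h2)).mul_const _
  -- step 3 : value of the limit
  have hval : (∫ u in Ioi (0:ℝ), (c*c) * ((1+u)^α * u^α))
      = c^2 * (Real.Gamma (1+α) * Real.Gamma (-1-2*α) / Real.Gamma (-α)) := by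
    rw [MeasureTheory.integral_const_mul, subst_beta hα1 hα2,
      real_beta (1+α) (-1-2*α) (by linarith) (by linarith),
      show (1+α) + (-1-2*α) = -α by ring]
    ring
  rw [hval] at hlim2
  exact hlim2.congr' (hev.mono fun t h => h.symm)
end

section
/- Let ψ ∈ L¹(0,∞) ∩ L²(0,∞), c ≠ 0, α < -1, and suppose ψ(t)/t^α → c as t → ∞. Define r(t) = ∫_0^∞ ψ(t+s) ψ(s) ds. Then r(t)/t^α → c ∫_0^∞ ψ(s) ds as t → ∞. -/
open MeasureTheory Real Set Filter

theorem stmt_10 (α c : ℝ) (hα : α < -1) (hc : c ≠ 0) (ψ : ℝ → ℝ)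
    (hL1 : IntegrableOn ψ (Set.Ioi (0:ℝ)) volume)
    (hL2 : IntegrableOn (fun s => ψ s ^ 2) (Set.Ioi (0:ℝ)) volume)
    (hlim : Tendsto (fun t => ψ t / t ^ α) atTop (nhds c))
    (r : ℝ → ℝ)
    (hr : ∀ t : ℝ, r t = ∫ s in Set.Ioi (0:ℝ), ψ (t + s) * ψ s) :
    Tendsto (fun t => r t / t ^ α) atTop (nhds (c * ∫ s in Set.Ioi (0:ℝ), ψ s)) := by
  -- measurable representative
  have hψm := hL1.aestronglyMeasurable
  set f : ℝ → ℝ := hψm.mk ψ with hfdef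
  have hfm : StronglyMeasurable f := hψm.stronglyMeasurable_mk
  have hψf : ψ =ᵐ[volume.restrict (Set.Ioi (0:ℝ))] f := hψm.ae_eq_mk
  -- the bad set has measure zero
  have hN : volume ({u | ψ u ≠ f u} ∩ Set.Ioi (0:ℝ)) = 0 := by
    have := hψf
    rw [Filter.EventuallyEq, ae_iff] at this
    rwa [Measure.restrict_apply' measurableSet_Ioi] at this
  -- for t ≥ 0, ψ (t + s) = f (t + s) a.e. on Ioi 0
  have hshift : ∀ t : ℝ, 0 ≤ t →
      (fun s => ψ (t + s)) =ᵐ[volume.restrict (Set.Ioi (0:ℝ))] (fun s => f (t + s)) := by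
    intro t ht
    have hsub : {s | s ∈ Set.Ioi (0:ℝ) ∧ ψ (t + s) ≠ f (t + s)} ⊆
        (fun s => t + s) ⁻¹' ({u | ψ u ≠ f u} ∩ Set.Ioi (0:ℝ)) := by
      intro s hs
      refine ⟨hs.2, ?_⟩
      have : (0:ℝ) < s := hs.1
      simp only [Set.mem_Ioi]
      linarith
    have h0 : volume ((fun s => t + s) ⁻¹' ({u | ψ u ≠ f u} ∩ Set.Ioi (0:ℝ))) = 0 := by
      rw [measure_preimage_add]; exact hN
    have h1 : volume {s | s ∈ Set.Ioi (0:ℝ) ∧ ψ (t + s) ≠ f (t + s)} = 0 :=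
      measure_mono_null hsub h0
    rw [Filter.EventuallyEq, ae_iff, Measure.restrict_apply' measurableSet_Ioi]
    refine measure_mono_null ?_ h1
    intro s hs
    exact ⟨hs.2, hs.1⟩
  -- find T such that |ψ u| ≤ (|c|+1) * u ^ α for u ≥ T
  have hbd : ∀ᶠ u in atTop, |ψ u / u ^ α| ≤ |c| + 1 := by
    have := hlim.abs.eventually (eventually_le_nhds (by linarith [abs_nonneg c] : |c| < |c| + 1))
    exact this
  obtain ⟨T, hT⟩ := (hbd.and (eventually_ge_atTop (1:ℝ))).exists_forall_of_atTop
  have hT' : ∀ u : ℝ, T ≤ u → 1 ≤ u → |ψ u| ≤ (|c| + 1) * u ^ α := by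
    intro u hu hu1
    have hupos : (0:ℝ) < u := by linarith
    have hpow : (0:ℝ) < u ^ α := rpow_pos_of_pos hupos α
    have h1 := (hT u hu).1
    rw [abs_div, abs_of_pos hpow, div_le_iff₀ hpow] at h1
    exact h1
  set T' : ℝ := max T 1 with hT'def
  -- main dominated convergence
  have key : Tendsto (fun t => ∫ s in Set.Ioi (0:ℝ), ψ (t + s) * ψ s / t ^ α) atTop
      (nhds (∫ s in Set.Ioi (0:ℝ), c * ψ s)) := by
    apply tendsto_integral_filter_of_dominated_convergence
      (bound := fun s => (|c| + 1) * |ψ s|)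
    · -- measurability
      filter_upwards [eventually_ge_atTop (0:ℝ)] with t ht
      have : (fun s => ψ (t + s) * ψ s / t ^ α) =ᵐ[volume.restrict (Set.Ioi (0:ℝ))]
          (fun s => f (t + s) * f s / t ^ α) := by
        filter_upwards [hshift t ht, hψf] with s h1 h2
        rw [h1, h2]
      refine AEStronglyMeasurable.congr ?_ this.symm
      have : (fun s => f (t + s) * f s / t ^ α)
          = fun s => (f (t + s) * f s) * (t ^ α)⁻¹ := by
        funext s; rw [div_eq_mul_inv]
      rw [this]
      exact (((hfm.comp_measurable (measurable_const_add t)).mul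
        hfm).mul_const _).aestronglyMeasurable
    · -- bound
      filter_upwards [eventually_ge_atTop T'] with t ht
      have ht1 : (1:ℝ) ≤ t := le_trans (le_max_right T 1) ht
      have htT : T ≤ t := le_trans (le_max_left T 1) ht
      have htpos : (0:ℝ) < t := by linarith
      have hpow : (0:ℝ) < t ^ α := rpow_pos_of_pos htpos α
      refine (ae_restrict_iff' measurableSet_Ioi).2 (Filter.Eventually.of_forall ?_)
      intro s hs
      have hs0 : (0:ℝ) < s := hs
      have hts : T ≤ t + s := by linarith
      have hts1 : (1:ℝ) ≤ t + s := by linarith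
      have h1 : |ψ (t + s)| ≤ (|c| + 1) * (t + s) ^ α := hT' _ hts hts1
      have h2 : (t + s) ^ α ≤ t ^ α :=
        rpow_le_rpow_of_nonpos htpos (by linarith) (by linarith)
      have hc1 : (0:ℝ) ≤ |c| + 1 := by positivity
      calc ‖ψ (t + s) * ψ s / t ^ α‖ = |ψ (t + s)| * |ψ s| / t ^ α := by
            rw [Real.norm_eq_abs, abs_div, abs_mul, abs_of_pos hpow]
        _ ≤ ((|c| + 1) * t ^ α) * |ψ s| / t ^ α := by
            gcongr
            exact h1.trans (mul_le_mul_of_nonneg_left h2 hc1)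
        _ = (|c| + 1) * |ψ s| := by
            field_simp
    · -- bound integrable
      exact (hL1.abs.const_mul _)
    · -- pointwise limit
      refine (ae_restrict_iff' measurableSet_Ioi).2 (Filter.Eventually.of_forall ?_)
      intro s hs
      have hs0 : (0:ℝ) < s := hs
      have hA : Tendsto (fun t => ψ (t + s) / (t + s) ^ α) atTop (nhds c) :=
        hlim.comp (tendsto_atTop_add_const_right atTop s tendsto_id)
      have hB : Tendsto (fun t => (t + s) ^ α / t ^ α) atTop (nhds 1) := by
        have h1 : Tendsto (fun t : ℝ => 1 + s / t) atTop (nhds 1) := by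
          have h0 : Tendsto (fun t : ℝ => s / t) atTop (nhds 0) :=
            Tendsto.div_atTop tendsto_const_nhds tendsto_id
          simpa using (tendsto_const_nhds (x := (1:ℝ)) (f := atTop)).add h0
        have h2 : Tendsto (fun t : ℝ => (1 + s / t) ^ α) atTop (nhds 1) := by
          have hc : ContinuousAt (fun x : ℝ => x ^ α) 1 :=
            Real.continuousAt_rpow_const 1 α (Or.inl one_ne_zero)
          have := hc.tendsto.comp h1
          simpa [Function.comp_def] using this
        refine h2.congr' ?_
        filter_upwards [eventually_gt_atTop (0:ℝ)] with t ht
        have htne : t ≠ 0 := ne_of_gt ht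
        rw [show 1 + s / t = (t + s) / t by field_simp]
        rw [Real.div_rpow (by linarith) ht.le]
      have hmul := (hA.mul hB).mul_const (ψ s)
      simp only [one_mul, mul_one] at hmul
      refine Tendsto.congr' ?_ hmul
      filter_upwards [eventually_gt_atTop (0:ℝ)] with t ht
      have hp : (t + s) ^ α ≠ 0 := ne_of_gt (rpow_pos_of_pos (by linarith) α)
      have hq : (t : ℝ) ^ α ≠ 0 := ne_of_gt (rpow_pos_of_pos ht α)
      field_simp
  -- conclude
  have heq : (fun t => r t / t ^ α) = fun t => ∫ s in Set.Ioi (0:ℝ), ψ (t + s) * ψ s / t ^ α := by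
    funext t
    rw [hr t, integral_div]
  rw [heq, ← integral_const_mul]
  exact key
end

section
/- Let λ > 0, α ∈ ℝ, c ≠ 0, a > 0, and let f : ℝ → ℝ be continuously differentiable on [a, ∞) with f'(t)/t^α → c as t → ∞ and f locally integrable, zero on (-∞,0). Define ψ_f(t) = f(t) - λ e^{-λ t} ∫_{-∞}^t e^{λ s} f(s) ds. Then ψ_f(t)/t^α → c/λ as t → ∞. -/
open MeasureTheory Real Set Filter

-- basic helpers
lemma hlp_exp_deriv (lam x : ℝ) : HasDerivAt (fun s => Real.exp (lam * s)) (lam * Real.exp (lam * x)) x := by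
  have := ((hasDerivAt_id x).const_mul lam).exp
  simp only [id_eq, mul_one] at this
  rw [mul_comm]; exact this

lemma hlp_int_exp (lam m t : ℝ) (hlam : 0 < lam) :
    ∫ s in m..t, Real.exp (lam * s) = (Real.exp (lam * t) - Real.exp (lam * m)) / lam := by
  have h : ∀ x ∈ Set.uIcc m t, HasDerivAt (fun s => Real.exp (lam * s) / lam) (Real.exp (lam * x)) x := by
    intro x _
    have := (hlp_exp_deriv lam x).div_const lam
    simpa [mul_div_assoc, mul_div_cancel_left₀ _ hlam.ne'] using this
  have := intervalIntegral.integral_eq_sub_of_hasDerivAt h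
    (Real.continuous_exp.comp (continuous_const.mul continuous_id)).continuousOn.intervalIntegrable
  rw [this]; ring

lemma hlp_rpow_mem (γ A B x : ℝ) (hA : 0 < A) (hx : x ∈ Set.Icc A B) :
    x ^ γ ≤ A ^ γ + B ^ γ := by
  have hx0 : 0 < x := lt_of_lt_of_le hA hx.1
  have hB : 0 < B := lt_of_lt_of_le hx0 hx.2
  rcases le_or_gt 0 γ with h | h
  · have : x ^ γ ≤ B ^ γ := Real.rpow_le_rpow hx0.le hx.2 h
    nlinarith [Real.rpow_pos_of_pos hA γ]
  · have : x ^ γ ≤ A ^ γ := Real.rpow_le_rpow_of_nonpos hA hx.1 h.le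
    nlinarith [Real.rpow_pos_of_pos hB γ]

lemma hlp_cont (lam γ : ℝ) : ContinuousOn (fun s => Real.exp (lam * s) * s ^ γ) {x : ℝ | 0 < x} := by
  apply ContinuousOn.mul
  · exact (Real.continuous_exp.comp (continuous_const.mul continuous_id)).continuousOn
  · exact fun x hx => (Real.continuousAt_rpow_const x γ (Or.inl (ne_of_gt hx))).continuousWithinAt

lemma hlp_g0 (lam β T : ℝ) (hlam : 0 < lam) :
    Tendsto (fun t => Real.exp (-(lam/2)*t) * (T ^ (β-1) * t ^ (1-β) + (2:ℝ) ^ (1-β)) +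
      ((2:ℝ) ^ (1-β) + 1) / (lam * t)) atTop (nhds 0) := by
  have h1 : Tendsto (fun t : ℝ => t ^ (1-β) * Real.exp (-(lam/2)*t)) atTop (nhds 0) :=
    tendsto_rpow_mul_exp_neg_mul_atTop_nhds_zero (1-β) (lam/2) (by positivity)
  have h2 : Tendsto (fun t : ℝ => Real.exp (-(lam/2)*t)) atTop (nhds 0) := by
    have := Real.tendsto_exp_neg_atTop_nhds_zero.comp
      (Tendsto.const_mul_atTop (by positivity : (0:ℝ) < lam/2) tendsto_id)
    apply this.congr; intro t; simp [Function.comp, neg_mul]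
  have h3 : Tendsto (fun t : ℝ => ((2:ℝ) ^ (1-β) + 1) / (lam * t)) atTop (nhds 0) := by
    apply Tendsto.div_atTop tendsto_const_nhds
    exact Tendsto.const_mul_atTop hlam tendsto_id
  have : Tendsto (fun t : ℝ => T ^ (β-1) * (t ^ (1-β) * Real.exp (-(lam/2)*t)) +
      (2:ℝ) ^ (1-β) * Real.exp (-(lam/2)*t) + ((2:ℝ) ^ (1-β) + 1) / (lam * t)) atTop (nhds 0) := by
    have := ((h1.const_mul (T ^ (β-1))).add (h2.const_mul ((2:ℝ) ^ (1-β)))).add h3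
    simpa using this
  apply this.congr; intro t; ring

lemma hlp_L0 (lam β T : ℝ) (hlam : 0 < lam) (hT : 0 < T) :
    Tendsto (fun t => (∫ s in T..t, Real.exp (lam * s) * s ^ (β - 1)) /
      (Real.exp (lam * t) * t ^ β)) atTop (nhds 0) := by
  apply squeeze_zero' (g := fun t => Real.exp (-(lam/2)*t) * (T ^ (β-1) * t ^ (1-β) + (2:ℝ) ^ (1-β)) +
      ((2:ℝ) ^ (1-β) + 1) / (lam * t))
  · filter_upwards [eventually_ge_atTop (max (2*T) 1)] with t ht
    have ht1 : (1:ℝ) ≤ t := le_trans (le_max_right _ _) ht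
    have hTt : T ≤ t := by have := le_trans (le_max_left _ _) ht; nlinarith
    apply div_nonneg
    · apply intervalIntegral.integral_nonneg hTt
      intro s hs
      have hs0 : 0 < s := lt_of_lt_of_le hT hs.1
      positivity
    · have ht0 : (0:ℝ) < t := by linarith
      positivity
  · filter_upwards [eventually_ge_atTop (max (2*T) 1)] with t ht
    have ht1 : (1:ℝ) ≤ t := le_trans (le_max_right _ _) ht
    have ht0 : 0 < t := lt_of_lt_of_le one_pos ht1
    have h2T : 2*T ≤ t := le_trans (le_max_left _ _) ht
    have hTm : T ≤ t/2 := by linarith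
    have hm0 : 0 < t/2 := by linarith
    have hmt : t/2 ≤ t := by linarith
    have htm1 : t ^ (β-1) = t ^ β / t := by
      rw [Real.rpow_sub ht0, Real.rpow_one]
    have ht1m : t ^ (1-β) = t / t ^ β := by
      rw [Real.rpow_sub ht0, Real.rpow_one]
    have hK2' : (2:ℝ) ^ (1-β) = ((2:ℝ) ^ (β-1))⁻¹ := by
      rw [show (1-β) = -(β-1) by ring, Real.rpow_neg (by norm_num)]
    have hhalf : (t/2) ^ (β-1) = (2:ℝ) ^ (1-β) * t ^ β / t := by
      rw [Real.div_rpow ht0.le (by norm_num), htm1, hK2']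
      ring
    have hEE : Real.exp (-(lam/2)*t) * Real.exp (lam * t) = Real.exp (lam * (t/2)) := by
      rw [← Real.exp_add]; ring_nf
    set E := Real.exp (lam * t) with hE
    set E2 := Real.exp (lam * (t/2)) with hE2
    set P := t ^ β with hP
    set R := T ^ (β-1) with hR
    set K2 := (2:ℝ) ^ (1-β) with hK2
    have hPpos : 0 < P := Real.rpow_pos_of_pos ht0 β
    have hRpos : 0 < R := Real.rpow_pos_of_pos hT _
    have hKpos : 0 < K2 := Real.rpow_pos_of_pos two_pos _
    have hEpos : 0 < E := Real.exp_pos _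
    have hE2pos : 0 < E2 := Real.exp_pos _
    -- split integral at t/2
    have hi1 : IntervalIntegrable (fun s => Real.exp (lam * s) * s ^ (β-1)) volume T (t/2) := by
      apply ((hlp_cont lam (β-1)).mono _).intervalIntegrable
      rw [Set.uIcc_of_le hTm]; intro x hx; exact lt_of_lt_of_le hT hx.1
    have hi2 : IntervalIntegrable (fun s => Real.exp (lam * s) * s ^ (β-1)) volume (t/2) t := by
      apply ((hlp_cont lam (β-1)).mono _).intervalIntegrable
      rw [Set.uIcc_of_le hmt]; intro x hx; exact lt_of_lt_of_le (lt_of_lt_of_le hT hTm) hx.1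
    have hsplit : (∫ s in T..t, Real.exp (lam * s) * s ^ (β-1)) =
        (∫ s in T..(t/2), Real.exp (lam * s) * s ^ (β-1)) +
        (∫ s in (t/2)..t, Real.exp (lam * s) * s ^ (β-1)) :=
      (intervalIntegral.integral_add_adjacent_intervals hi1 hi2).symm
    -- bound first piece
    have hb1 : (∫ s in T..(t/2), Real.exp (lam * s) * s ^ (β-1)) ≤
        E2 * (R + K2 * P / t) * t := by
      have hmono := intervalIntegral.integral_mono_on hTm hi1
        (intervalIntegrable_const (c := E2 * (R + K2 * P / t)))
        (fun s hs => by
          have hs0 : 0 < s := lt_of_lt_of_le hT hs.1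
          have h1 : Real.exp (lam * s) ≤ E2 := by
            rw [hE2]; exact Real.exp_le_exp.2 (mul_le_mul_of_nonneg_left hs.2 hlam.le)
          have h2 : s ^ (β-1) ≤ R + (t/2) ^ (β-1) := hlp_rpow_mem _ _ _ _ hT hs
          rw [hhalf] at h2
          have h3 : 0 ≤ s ^ (β-1) := (Real.rpow_pos_of_pos hs0 _).le
          nlinarith [Real.exp_pos (lam * s)])
      rw [intervalIntegral.integral_const, smul_eq_mul] at hmono
      calc (∫ s in T..(t/2), Real.exp (lam * s) * s ^ (β-1))
          ≤ (t/2 - T) * (E2 * (R + K2 * P / t)) := hmono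
        _ ≤ t * (E2 * (R + K2 * P / t)) := by
            apply mul_le_mul_of_nonneg_right (by linarith) (by positivity)
        _ = E2 * (R + K2 * P / t) * t := by ring
    -- bound second piece
    have hb2 : (∫ s in (t/2)..t, Real.exp (lam * s) * s ^ (β-1)) ≤
        (K2 * P / t + P / t) * (E / lam) := by
      have hmono := intervalIntegral.integral_mono_on (g := fun s =>
          (K2 * P / t + P / t) * Real.exp (lam * s)) hmt hi2
        (((continuous_const.mul (Real.continuous_exp.comp
          (continuous_const.mul continuous_id))).continuousOn).intervalIntegrable)
        (fun s hs => by
          have hs0 : 0 < s := lt_of_lt_of_le hm0 hs.1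
          have h2 : s ^ (β-1) ≤ (t/2) ^ (β-1) + t ^ (β-1) := hlp_rpow_mem _ _ _ _ hm0 hs
          rw [hhalf, htm1] at h2
          nlinarith [Real.exp_pos (lam * s)])
      have heq : (∫ s in (t/2)..t, (K2 * P / t + P / t) * Real.exp (lam * s)) =
          (K2 * P / t + P / t) * ((E - E2) / lam) := by
        rw [intervalIntegral.integral_const_mul, hlp_int_exp lam _ _ hlam]
      rw [heq] at hmono
      calc (∫ s in (t/2)..t, Real.exp (lam * s) * s ^ (β-1))
          ≤ (K2 * P / t + P / t) * ((E - E2) / lam) := hmono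
        _ ≤ (K2 * P / t + P / t) * (E / lam) := by
            apply mul_le_mul_of_nonneg_left _ (by positivity)
            exact (div_le_div_iff_of_pos_right hlam).2 (by linarith)
    -- combine
    rw [hsplit, add_div]
    have goal1 : (∫ s in T..(t/2), Real.exp (lam * s) * s ^ (β-1)) / (E * P) ≤
        Real.exp (-(lam/2)*t) * (R * t ^ (1-β) + K2) := by
      rw [div_le_iff₀ (by positivity)]
      calc (∫ s in T..(t/2), Real.exp (lam * s) * s ^ (β-1))
          ≤ E2 * (R + K2 * P / t) * t := hb1
        _ = Real.exp (-(lam/2)*t) * (R * t + K2 * P) * E := by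
            rw [← hEE]; field_simp
        _ = Real.exp (-(lam/2)*t) * (R * t ^ (1-β) + K2) * (E * P) := by
            rw [ht1m]; field_simp
    have goal2 : (∫ s in (t/2)..t, Real.exp (lam * s) * s ^ (β-1)) / (E * P) ≤
        (K2 + 1) / (lam * t) := by
      rw [div_le_iff₀ (by positivity)]
      calc (∫ s in (t/2)..t, Real.exp (lam * s) * s ^ (β-1))
          ≤ (K2 * P / t + P / t) * (E / lam) := hb2
        _ = (K2 + 1) / (lam * t) * (E * P) := by field_simp
    linarith
  · exact hlp_g0 lam β T hlam

lemma hlp_PE (lam β : ℝ) (hlam : 0 < lam) :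
    Tendsto (fun t : ℝ => 1 / (Real.exp (lam * t) * t ^ β)) atTop (nhds 0) := by
  have h := tendsto_rpow_mul_exp_neg_mul_atTop_nhds_zero (-β) lam hlam
  apply h.congr'
  filter_upwards [eventually_gt_atTop (0:ℝ)] with t ht
  rw [Real.rpow_neg ht.le, show -lam*t = -(lam*t) by ring, Real.exp_neg]
  field_simp

lemma hlp_intgr (lam γ T t : ℝ) (hT : 0 < T) (hTt : T ≤ t) :
    IntervalIntegrable (fun s => Real.exp (lam * s) * s ^ γ) volume T t := by
  apply ((hlp_cont lam γ).mono _).intervalIntegrable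
  rw [Set.uIcc_of_le hTt]; intro x hx; exact lt_of_lt_of_le hT hx.1

lemma hlp_L1 (lam β T : ℝ) (hlam : 0 < lam) (hT : 0 < T) :
    Tendsto (fun t => (∫ s in T..t, Real.exp (lam * s) * s ^ β) /
      (Real.exp (lam * t) * t ^ β)) atTop (nhds (1/lam)) := by
  have key : ∀ t, T ≤ t → (∫ s in T..t, Real.exp (lam * s) * s ^ β) =
      Real.exp (lam * t) * t ^ β / lam - Real.exp (lam * T) * T ^ β / lam -
      (β / lam) * ∫ s in T..t, Real.exp (lam * s) * s ^ (β - 1) := by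
    intro t hTt
    have hftc : ∫ s in T..t, (Real.exp (lam * s) * s ^ β + (β/lam) * (Real.exp (lam * s) * s ^ (β-1))) =
        Real.exp (lam * t) * t ^ β / lam - Real.exp (lam * T) * T ^ β / lam := by
      apply intervalIntegral.integral_eq_sub_of_hasDerivAt
      · intro x hx
        rw [Set.uIcc_of_le hTt] at hx
        have hx0 : 0 < x := lt_of_lt_of_le hT hx.1
        have h1 : HasDerivAt (fun s : ℝ => s ^ β) (β * x ^ (β-1)) x :=
          Real.hasDerivAt_rpow_const (Or.inl hx0.ne')
        have : HasDerivAt (fun s => Real.exp (lam * s) * s ^ β / lam)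
            ((lam * Real.exp (lam * x) * x ^ β + Real.exp (lam * x) * (β * x ^ (β-1))) / lam) x :=
          ((hlp_exp_deriv lam x).mul h1).div_const lam
        refine this.congr_deriv ?_
        field_simp
      · apply IntervalIntegrable.add (hlp_intgr lam β T t hT hTt)
        exact (hlp_intgr lam (β-1) T t hT hTt).const_mul _
    rw [intervalIntegral.integral_add (hlp_intgr lam β T t hT hTt)
      ((hlp_intgr lam (β-1) T t hT hTt).const_mul _),
      intervalIntegral.integral_const_mul] at hftc
    linarith [hftc]
  have h1 : Tendsto (fun t => (1:ℝ)/lam - (Real.exp (lam * T) * T ^ β / lam) *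
      (1 / (Real.exp (lam * t) * t ^ β)) - (β/lam) *
      ((∫ s in T..t, Real.exp (lam * s) * s ^ (β-1)) / (Real.exp (lam * t) * t ^ β)))
      atTop (nhds (1/lam)) := by
    have h := ((tendsto_const_nhds (x := (1:ℝ)/lam) (f := atTop)).sub
      ((hlp_PE lam β hlam).const_mul (Real.exp (lam * T) * T ^ β / lam))).sub
        ((hlp_L0 lam β T hlam hT).const_mul (β/lam))
    simpa using h
  apply h1.congr'
  filter_upwards [eventually_ge_atTop (max T 1)] with t ht
  have hTt : T ≤ t := le_trans (le_max_left _ _) ht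
  have ht0 : (0:ℝ) < t := lt_of_lt_of_le one_pos (le_trans (le_max_right _ _) ht)
  rw [key t hTt]
  have hD : Real.exp (lam * t) * t ^ β ≠ 0 := by positivity
  field_simp

lemma hlp_L2 (lam α b : ℝ) (v : ℝ → ℝ) (hlam : 0 < lam) (hb : 0 < b)
    (hv : ContinuousOn v (Set.Ici b))
    (h0 : Tendsto (fun s => v s / (Real.exp (lam * s) * s ^ α)) atTop (nhds 0)) :
    Tendsto (fun t => (∫ s in b..t, v s) / (Real.exp (lam * t) * t ^ α)) atTop (nhds 0) := by
  rw [NormedAddCommGroup.tendsto_nhds_zero]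
  intro ε hε
  -- find S with |v s| small relative to the exponential weight for s ≥ S
  have h0' : ∀ᶠ s in atTop, |v s / (Real.exp (lam * s) * s ^ α)| < ε * lam / 4 := by
    have h := Metric.tendsto_nhds.1 h0 (ε * lam / 4) (by positivity)
    filter_upwards [h] with s hs
    rwa [Real.dist_eq, sub_zero] at hs
  obtain ⟨S₀, hS₀⟩ := (h0'.and (eventually_ge_atTop (max b 1))).exists_forall_of_atTop
  set S := max S₀ (max b 1) with hSdef
  have hSb : b ≤ S := le_trans (le_max_left _ _) (le_max_right _ _)
  have hS1 : (1:ℝ) ≤ S := le_trans (le_max_right _ _) (le_max_right _ _)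
  have hS0 : (0:ℝ) < S := lt_of_lt_of_le one_pos hS1
  have hvb : ∀ s, S ≤ s → |v s| ≤ ε * lam / 4 * (Real.exp (lam * s) * s ^ α) := by
    intro s hs
    have hs0 : 0 < s := lt_of_lt_of_le hS0 hs
    have hD : 0 < Real.exp (lam * s) * s ^ α := by positivity
    have := (hS₀ s (le_trans (le_max_left _ _) hs)).1
    rw [abs_div, abs_of_pos hD, div_lt_iff₀ hD] at this
    exact this.le
  -- eventual bounds
  have hL1 := hlp_L1 lam α S hlam hS0
  have hL1' : ∀ᶠ t in atTop,
      (∫ s in S..t, Real.exp (lam * s) * s ^ α) / (Real.exp (lam * t) * t ^ α) ≤ 2/lam := by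
    have := Metric.tendsto_nhds.1 hL1 (1/lam) (by positivity)
    filter_upwards [this] with t ht
    rw [Real.dist_eq] at ht
    have := abs_lt.1 ht
    have h14 : (1:ℝ)/lam + 1/lam = 2/lam := by ring
    linarith [this.2]
  have hPE : ∀ᶠ t in atTop,
      |∫ s in b..S, v s| * (1 / (Real.exp (lam * t) * t ^ α)) < ε / 4 := by
    rcases eq_or_ne (|∫ s in b..S, v s|) 0 with h | h
    · filter_upwards [eventually_gt_atTop (0:ℝ)] with t ht
      rw [h]; simpa using by positivity
    · have habs : 0 < |∫ s in b..S, v s| := lt_of_le_of_ne (abs_nonneg _) (Ne.symm h)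
      have := Metric.tendsto_nhds.1 ((hlp_PE lam α hlam).const_mul (|∫ s in b..S, v s|))
        (ε/4) (by positivity)
      filter_upwards [this] with t ht
      rw [Real.dist_eq, mul_zero, sub_zero] at ht
      calc |∫ s in b..S, v s| * (1 / (Real.exp (lam * t) * t ^ α))
          ≤ |(|∫ s in b..S, v s|) * (1 / (Real.exp (lam * t) * t ^ α))| := le_abs_self _
        _ < ε / 4 := ht
  filter_upwards [hL1', hPE, eventually_ge_atTop S] with t h1 h2 hSt
  have ht0 : 0 < t := lt_of_lt_of_le hS0 hSt
  have hD : 0 < Real.exp (lam * t) * t ^ α := by positivity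
  have hbt : b ≤ t := le_trans hSb hSt
  -- integrability of v
  have hintv : ∀ x y, b ≤ x → x ≤ y → IntervalIntegrable v volume x y := by
    intro x y hx hxy
    apply (hv.mono _).intervalIntegrable
    rw [Set.uIcc_of_le hxy]; intro z hz; exact le_trans hx hz.1
  have hsplit : (∫ s in b..t, v s) = (∫ s in b..S, v s) + ∫ s in S..t, v s :=
    (intervalIntegral.integral_add_adjacent_intervals (hintv b S le_rfl hSb)
      (hintv S t hSb hSt)).symm
  have hInn : 0 ≤ (∫ s in S..t, Real.exp (lam * s) * s ^ α) := by
    apply intervalIntegral.integral_nonneg hSt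
    intro s hs
    have hs0 : 0 < s := lt_of_lt_of_le hS0 hs.1
    positivity
  -- bound the tail integral
  have htail : |∫ s in S..t, v s| ≤
      ε * lam / 4 * ∫ s in S..t, Real.exp (lam * s) * s ^ α := by
    have hnn := intervalIntegral.norm_integral_le_abs_of_norm_le (μ := volume)
      (f := v) (g := fun s => ε * lam / 4 * (Real.exp (lam * s) * s ^ α))
      (a := S) (b := t) ?_ ((hlp_intgr lam α S t hS0 hSt).const_mul _)
    · rw [intervalIntegral.integral_const_mul,
        abs_of_nonneg (by positivity : (0:ℝ) ≤ ε * lam / 4 * ∫ s in S..t, Real.exp (lam * s) * s ^ α)] at hnn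
      simpa using hnn
    · filter_upwards [ae_restrict_mem measurableSet_uIoc] with s hs
      rw [Set.uIoc_of_le hSt] at hs
      simpa using hvb s hs.1.le
  -- tail integral nonneg & main estimate
  have hmain : (∫ s in S..t, Real.exp (lam * s) * s ^ α) / (Real.exp (lam * t) * t ^ α) ≤ 2/lam := h1
  rw [Real.norm_eq_abs, abs_div, abs_of_pos hD, hsplit]
  calc (|(∫ s in b..S, v s) + ∫ s in S..t, v s|) / (Real.exp (lam * t) * t ^ α)
      ≤ (|∫ s in b..S, v s| + |∫ s in S..t, v s|) / (Real.exp (lam * t) * t ^ α) := by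
        exact (div_le_div_iff_of_pos_right hD).2 (abs_add_le _ _)
    _ ≤ (|∫ s in b..S, v s| + ε * lam / 4 * ∫ s in S..t, Real.exp (lam * s) * s ^ α) /
          (Real.exp (lam * t) * t ^ α) := by
        exact (div_le_div_iff_of_pos_right hD).2 (by linarith [htail])
    _ = |∫ s in b..S, v s| * (1 / (Real.exp (lam * t) * t ^ α)) +
        ε * lam / 4 * ((∫ s in S..t, Real.exp (lam * s) * s ^ α) / (Real.exp (lam * t) * t ^ α)) := by
        field_simp
    _ < ε / 4 + ε * lam / 4 * (2/lam) := by
        have hq : 0 ≤ ε * lam / 4 := by positivity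
        have := mul_le_mul_of_nonneg_left hmain hq
        linarith [h2, this]
    _ ≤ ε := by
        have heq : ε * lam / 4 * (2/lam) = ε/2 := by field_simp; ring
        rw [heq]; linarith

lemma hlp_key (lam α c b : ℝ) (u : ℝ → ℝ) (hlam : 0 < lam) (hb : 0 < b)
    (hu : ContinuousOn u (Set.Ici b))
    (h : Tendsto (fun s => u s / (Real.exp (lam * s) * s ^ α)) atTop (nhds c)) :
    Tendsto (fun t => (∫ s in b..t, u s) / (Real.exp (lam * t) * t ^ α)) atTop (nhds (c/lam)) := by
  set v : ℝ → ℝ := fun s => u s - c * (Real.exp (lam * s) * s ^ α) with hvdef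
  have hIci : Set.Ici b ⊆ {x : ℝ | 0 < x} := fun x hx => lt_of_lt_of_le hb hx
  have hv : ContinuousOn v (Set.Ici b) := hu.sub (((hlp_cont lam α).mono hIci).const_smul c)
  have hv0 : Tendsto (fun s => v s / (Real.exp (lam * s) * s ^ α)) atTop (nhds 0) := by
    have h' := h.sub_const c
    rw [sub_self] at h'
    apply h'.congr'
    filter_upwards [eventually_gt_atTop (0:ℝ)] with s hs
    have hD : Real.exp (lam * s) * s ^ α ≠ 0 := by positivity
    rw [hvdef]
    field_simp
  have hL2 := hlp_L2 lam α b v hlam hb hv hv0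
  have hL1 := hlp_L1 lam α b hlam hb
  have hsum : Tendsto (fun t => (∫ s in b..t, v s) / (Real.exp (lam * t) * t ^ α) +
      c * ((∫ s in b..t, Real.exp (lam * s) * s ^ α) / (Real.exp (lam * t) * t ^ α)))
      atTop (nhds (c/lam)) := by
    have := hL2.add (hL1.const_mul c)
    simpa [mul_one_div, div_eq_mul_inv] using this
  apply hsum.congr'
  filter_upwards [eventually_ge_atTop b] with t hbt
  have hintu : IntervalIntegrable u volume b t := by
    apply (hu.mono _).intervalIntegrable
    rw [Set.uIcc_of_le hbt]; exact fun z hz => hz.1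
  have hintE := hlp_intgr lam α b t hb hbt
  have : (∫ s in b..t, v s) = (∫ s in b..t, u s) -
      c * ∫ s in b..t, Real.exp (lam * s) * s ^ α := by
    rw [hvdef, intervalIntegral.integral_sub hintu (hintE.const_mul c),
      intervalIntegral.integral_const_mul]
  rw [this]
  ring

theorem stmt_12 (lam α c a : ℝ) (hlam : 0 < lam) (hc : c ≠ 0) (ha : 0 < a)
    (f ψ : ℝ → ℝ)
    (hf : LocallyIntegrable f volume)
    (hzero : ∀ t < (0:ℝ), f t = 0)
    (hdiff : ContDiffOn ℝ 1 f (Set.Ici a))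
    (hderiv : Tendsto (fun t => deriv f t / t ^ α) atTop (nhds c))
    (hint : ∀ t : ℝ, IntegrableOn (fun s => Real.exp (lam * s) * f s) (Set.Iic t) volume)
    (hψ : ∀ t : ℝ, ψ t = f t - lam * Real.exp (-lam * t) * ∫ s in Set.Iic t, Real.exp (lam * s) * f s) :
    Tendsto (fun t => ψ t / t ^ α) atTop (nhds (c / lam)) := by
  set b := a + 1 with hbdef
  have hb0 : 0 < b := by linarith
  have hab : a < b := by linarith
  have hIoi : Set.Ici b ⊆ Set.Ioi a := fun x hx => lt_of_lt_of_le hab hx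
  have hderivAt : ∀ x ∈ Set.Ioi a, HasDerivAt f (deriv f x) x := by
    intro x hx
    have hCD : ContDiffAt ℝ 1 f x := hdiff.contDiffAt (Ici_mem_nhds hx)
    exact (hCD.differentiableAt one_ne_zero).hasDerivAt
  have hcderiv : ContinuousOn (deriv f) (Set.Ioi a) :=
    (hdiff.mono Set.Ioi_subset_Ici_self).continuousOn_deriv_of_isOpen isOpen_Ioi le_rfl
  have hcf : ContinuousOn f (Set.Ioi a) := (hdiff.mono Set.Ioi_subset_Ici_self).continuousOn
  set u : ℝ → ℝ := fun s => Real.exp (lam * s) * deriv f s with hudef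
  have hucont : ContinuousOn u (Set.Ici b) := by
    apply ContinuousOn.mul
    · exact (Real.continuous_exp.comp (continuous_const.mul continuous_id)).continuousOn
    · exact hcderiv.mono hIoi
  have hulim : Tendsto (fun s => u s / (Real.exp (lam * s) * s ^ α)) atTop (nhds c) := by
    apply hderiv.congr'
    filter_upwards [eventually_gt_atTop (0:ℝ)] with s hs
    have hE : Real.exp (lam * s) ≠ 0 := (Real.exp_pos _).ne'
    have hP : s ^ α ≠ 0 := (Real.rpow_pos_of_pos hs α).ne'
    rw [hudef]
    field_simp
  set K : ℝ := Real.exp (lam * b) * f b - lam * ∫ s in Set.Iic b, Real.exp (lam * s) * f s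
    with hKdef
  have hkey := hlp_key lam α c b u hlam hb0 hucont hulim
  have hfinal : Tendsto (fun t => K * (1 / (Real.exp (lam * t) * t ^ α)) +
      (∫ s in b..t, u s) / (Real.exp (lam * t) * t ^ α)) atTop (nhds (c/lam)) := by
    have := ((hlp_PE lam α hlam).const_mul K).add hkey
    simpa using this
  apply hfinal.congr'
  filter_upwards [eventually_ge_atTop b] with t hbt
  have ht0 : 0 < t := lt_of_lt_of_le hb0 hbt
  have hP : (0:ℝ) < t ^ α := Real.rpow_pos_of_pos ht0 α
  have hE : (0:ℝ) < Real.exp (lam * t) := Real.exp_pos _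
  -- split the Iic integral
  have hsplit : (∫ s in Set.Iic t, Real.exp (lam * s) * f s) =
      (∫ s in Set.Iic b, Real.exp (lam * s) * f s) + ∫ s in b..t, Real.exp (lam * s) * f s := by
    have := intervalIntegral.integral_Iic_sub_Iic (hint b) (hint t)
    linarith
  -- integration by parts
  have hsub : Set.uIcc b t ⊆ Set.Ioi a := by
    rw [Set.uIcc_of_le hbt]; exact fun z hz => lt_of_lt_of_le hab hz.1
  have hcont1 : ContinuousOn (fun s => Real.exp (lam * s) * f s) (Set.uIcc b t) := by
    apply ContinuousOn.mul
    · exact (Real.continuous_exp.comp (continuous_const.mul continuous_id)).continuousOn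
    · exact hcf.mono hsub
  have hcontu : ContinuousOn u (Set.uIcc b t) := by
    apply ContinuousOn.mul
    · exact (Real.continuous_exp.comp (continuous_const.mul continuous_id)).continuousOn
    · exact hcderiv.mono hsub
  have hibp : ∫ s in b..t, (lam * (Real.exp (lam * s) * f s) + u s) =
      Real.exp (lam * t) * f t - Real.exp (lam * b) * f b := by
    apply intervalIntegral.integral_eq_sub_of_hasDerivAt
    · intro x hx
      have hxa : x ∈ Set.Ioi a := hsub hx
      have : HasDerivAt (fun s => Real.exp (lam * s) * f s)
          (lam * Real.exp (lam * x) * f x + Real.exp (lam * x) * deriv f x) x :=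
        (hlp_exp_deriv lam x).mul (hderivAt x hxa)
      refine this.congr_deriv ?_
      rw [hudef]
      ring
    · exact ((hcont1.const_smul lam).add hcontu).intervalIntegrable
  have hibp' : lam * (∫ s in b..t, Real.exp (lam * s) * f s) + (∫ s in b..t, u s) =
      Real.exp (lam * t) * f t - Real.exp (lam * b) * f b := by
    have h1 : IntervalIntegrable (fun s => lam * (Real.exp (lam * s) * f s)) volume b t :=
      (hcont1.const_smul lam).intervalIntegrable
    have h2 : IntervalIntegrable u volume b t := hcontu.intervalIntegrable
    rw [intervalIntegral.integral_add h1 h2, intervalIntegral.integral_const_mul] at hibp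
    exact hibp
  have hJ : (∫ s in b..t, u s) = Real.exp (lam * t) * f t - Real.exp (lam * b) * f b -
      lam * ∫ s in b..t, Real.exp (lam * s) * f s := by linarith
  rw [hψ t, hsplit, hJ, hKdef, show -lam * t = -(lam * t) by ring, Real.exp_neg]
  field_simp
  ring
end

section
/- Let λ > 0, H ∈ (0,1), α = H - 1/2 ≥ -1/2 (H ≠ 1/2 allowed), and define ψ(t) = t^α - λ e^{-λ t} ∫_0^t e^{λ u} u^α du for t > 0. Then ψ(t)/t^α → 1 as t → 0⁺, and ψ(t)/t^{α-1} → α/λ as t → ∞. -/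
open MeasureTheory Real Set Filter


lemma my_cont (lam β : ℝ) {a b : ℝ} (ha : 0 < a) (hab : a ≤ b) :
    ContinuousOn (fun u : ℝ => Real.exp (lam * u) * u ^ β) (Set.uIcc a b) := by
  apply ContinuousOn.mul
  · exact (Real.continuous_exp.comp (continuous_const.mul continuous_id)).continuousOn
  · apply ContinuousOn.rpow_const continuousOn_id
    intro x hx
    rw [Set.uIcc_of_le hab] at hx
    exact Or.inl (lt_of_lt_of_le ha hx.1).ne'

lemma my_int (lam β : ℝ) {a b : ℝ} (ha : 0 < a) (hab : a ≤ b) :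
    IntervalIntegrable (fun u : ℝ => Real.exp (lam * u) * u ^ β) volume a b :=
  (my_cont lam β ha hab).intervalIntegrable

lemma my_int0 (lam β : ℝ) (hβ : -1 < β) (t : ℝ) :
    IntervalIntegrable (fun u : ℝ => Real.exp (lam * u) * u ^ β) volume 0 t :=
  (intervalIntegral.intervalIntegrable_rpow' hβ).continuousOn_mul
    ((Real.continuous_exp.comp (continuous_const.mul continuous_id)).continuousOn)

lemma my_expint (lam : ℝ) (hlam : 0 < lam) (a b : ℝ) :
    ∫ u in a..b, Real.exp (lam * u) = (Real.exp (lam * b) - Real.exp (lam * a)) / lam := by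
  have key : ∫ u in a..b, Real.exp (lam * u)
      = Real.exp (lam * b) / lam - Real.exp (lam * a) / lam := by
    apply intervalIntegral.integral_eq_sub_of_hasDerivAt (f := fun u => Real.exp (lam * u) / lam)
    · intro x _
      have h1 : HasDerivAt (fun u : ℝ => Real.exp (lam * u)) (Real.exp (lam * x) * lam) x := by
        simpa [Function.comp_def] using (Real.hasDerivAt_exp (lam * x)).comp x ((hasDerivAt_id x).const_mul lam)
      have := h1.div_const lam
      exact this.congr_deriv (by field_simp)
    · exact ((Real.continuous_exp.comp (continuous_const.mul continuous_id)).continuousOn).intervalIntegrable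
  rw [key]; ring

lemma my_ibp (lam β : ℝ) (hlam : 0 < lam) {t : ℝ} (ht : 1 ≤ t) :
    ∫ u in (1:ℝ)..t, Real.exp (lam * u) * u ^ β
      = (Real.exp (lam * t) * t ^ β - Real.exp lam) / lam
        - (β / lam) * ∫ u in (1:ℝ)..t, Real.exp (lam * u) * u ^ (β - 1) := by
  have key : ∫ u in (1:ℝ)..t,
      (Real.exp (lam * u) * u ^ β + (β / lam) * (Real.exp (lam * u) * u ^ (β - 1)))
      = Real.exp (lam * t) * t ^ β / lam - Real.exp (lam * 1) * (1:ℝ) ^ β / lam := by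
    apply intervalIntegral.integral_eq_sub_of_hasDerivAt
      (f := fun u => Real.exp (lam * u) * u ^ β / lam)
    · intro x hx
      rw [Set.uIcc_of_le ht] at hx
      have hx0 : x ≠ 0 := by
        have : (0:ℝ) < x := lt_of_lt_of_le one_pos hx.1
        exact this.ne'
      have h1 : HasDerivAt (fun u : ℝ => Real.exp (lam * u)) (Real.exp (lam * x) * lam) x := by
        simpa [Function.comp_def] using (Real.hasDerivAt_exp (lam * x)).comp x ((hasDerivAt_id x).const_mul lam)
      have h2 : HasDerivAt (fun u : ℝ => u ^ β) (β * x ^ (β - 1)) x :=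
        Real.hasDerivAt_rpow_const (Or.inl hx0)
      have := (h1.mul h2).div_const lam
      exact this.congr_deriv (by field_simp)
    · exact (my_int lam β one_pos ht).add ((my_int lam (β-1) one_pos ht).const_mul _)
  rw [intervalIntegral.integral_add (my_int lam β one_pos ht)
    ((my_int lam (β-1) one_pos ht).const_mul _), intervalIntegral.integral_const_mul] at key
  rw [mul_one, Real.one_rpow, mul_one] at key
  rw [sub_div]
  linarith

lemma my_part1 (lam α : ℝ) (hlam : 0 < lam) (hαl : -1 < α) (hαu : α < 1)
    (ψ : ℝ → ℝ)
    (hψ : ∀ t > (0:ℝ), ψ t = t ^ α - lam * Real.exp (-lam * t) * ∫ u in (0:ℝ)..t, Real.exp (lam * u) * u ^ α) :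
    Tendsto (fun t => ψ t / t ^ α) (nhdsWithin 0 (Set.Ioi 0)) (nhds 1) := by
  have hα1 : 0 < α + 1 := by linarith
  apply tendsto_of_tendsto_of_tendsto_of_le_of_le' (g := fun t : ℝ => 1 - lam * t / (α + 1))
    (h := fun _ : ℝ => (1:ℝ))
  · have hc : Continuous (fun t : ℝ => 1 - lam * t / (α + 1)) := by continuity
    have := (hc.tendsto 0).mono_left (nhdsWithin_le_nhds : nhdsWithin (0:ℝ) (Set.Ioi 0) ≤ nhds 0)
    simpa using this
  · exact tendsto_const_nhds
  · -- lower bound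
    filter_upwards [self_mem_nhdsWithin] with t ht
    have ht0 : (0:ℝ) < t := ht
    have htα : (0:ℝ) < t ^ α := Real.rpow_pos_of_pos ht0 α
    have hle : (∫ u in (0:ℝ)..t, Real.exp (lam * u) * u ^ α)
        ≤ Real.exp (lam * t) * (t ^ (α + 1) / (α + 1)) := by
      have hmono := intervalIntegral.integral_mono_on (f := fun u : ℝ => Real.exp (lam * u) * u ^ α)
        (g := fun u : ℝ => Real.exp (lam * t) * u ^ α) (μ := volume) ht0.le
        (my_int0 lam α hαl t)
        ((intervalIntegral.intervalIntegrable_rpow' hαl).const_mul _)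
        (fun u hu => by
          apply mul_le_mul_of_nonneg_right _ (Real.rpow_nonneg hu.1 α)
          exact Real.exp_le_exp.2 (mul_le_mul_of_nonneg_left hu.2 hlam.le))
      calc (∫ u in (0:ℝ)..t, Real.exp (lam * u) * u ^ α)
          ≤ ∫ u in (0:ℝ)..t, Real.exp (lam * t) * u ^ α := hmono
        _ = Real.exp (lam * t) * ∫ u in (0:ℝ)..t, u ^ α := by
            rw [intervalIntegral.integral_const_mul]
        _ = Real.exp (lam * t) * (t ^ (α + 1) / (α + 1)) := by
            rw [integral_rpow (Or.inl hαl)]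
            rw [Real.zero_rpow (by linarith : α + 1 ≠ 0)]
            ring_nf
    rw [hψ t ht0, sub_div, div_self htα.ne']
    have hexp : Real.exp (-lam * t) * Real.exp (lam * t) = 1 := by
      rw [← Real.exp_add, neg_mul, neg_add_cancel, Real.exp_zero]
    have htα1 : t ^ (α + 1) = t ^ α * t := Real.rpow_add_one ht0.ne' α
    have h2 : lam * Real.exp (-lam * t) * (∫ u in (0:ℝ)..t, Real.exp (lam * u) * u ^ α)
        ≤ lam * t / (α + 1) * t ^ α := by
      calc lam * Real.exp (-lam * t) * (∫ u in (0:ℝ)..t, Real.exp (lam * u) * u ^ α)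
          ≤ lam * Real.exp (-lam * t) * (Real.exp (lam * t) * (t ^ (α + 1) / (α + 1))) := by
            apply mul_le_mul_of_nonneg_left hle (by positivity)
        _ = (Real.exp (-lam * t) * Real.exp (lam * t)) * (lam * (t ^ α * t) / (α + 1)) := by
            rw [htα1]; ring
        _ = lam * t / (α + 1) * t ^ α := by rw [hexp]; ring
    have h3 : lam * Real.exp (-lam * t) * (∫ u in (0:ℝ)..t, Real.exp (lam * u) * u ^ α) / t ^ α
        ≤ lam * t / (α + 1) := by
      rw [div_le_iff₀ htα]; exact h2
    linarith
  · -- upper bound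
    filter_upwards [self_mem_nhdsWithin] with t ht
    have ht0 : (0:ℝ) < t := ht
    have htα : (0:ℝ) < t ^ α := Real.rpow_pos_of_pos ht0 α
    rw [hψ t ht0, div_le_one htα]
    have hI0 : 0 ≤ ∫ u in (0:ℝ)..t, Real.exp (lam * u) * u ^ α :=
      intervalIntegral.integral_nonneg ht0.le
        (fun u hu => mul_nonneg (Real.exp_pos _).le (Real.rpow_nonneg hu.1 α))
    have : 0 ≤ lam * Real.exp (-lam * t) * ∫ u in (0:ℝ)..t, Real.exp (lam * u) * u ^ α :=
      mul_nonneg (mul_nonneg hlam.le (Real.exp_pos _).le) hI0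
    linarith

lemma my_part2 (lam α : ℝ) (hlam : 0 < lam) (hαl : -1 < α) (hαu : α < 1)
    (ψ : ℝ → ℝ)
    (hψ : ∀ t > (0:ℝ), ψ t = t ^ α - lam * Real.exp (-lam * t) * ∫ u in (0:ℝ)..t, Real.exp (lam * u) * u ^ α) :
    Tendsto (fun t => ψ t / t ^ (α - 1)) atTop (nhds (α / lam)) := by
  set L : ℝ → ℝ := fun t => ∫ u in (1:ℝ)..t, Real.exp (lam * u) * u ^ (α - 2) with hL
  set I1 : ℝ := ∫ u in (0:ℝ)..1, Real.exp (lam * u) * u ^ α with hI1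
  set C : ℝ := Real.exp lam - lam * I1 with hC
  -- the two vanishing pieces
  have T1 : Tendsto (fun t : ℝ => t ^ (1 - α) * Real.exp (-lam * t)) atTop (nhds 0) :=
    tendsto_rpow_mul_exp_neg_mul_atTop_nhds_zero (1 - α) lam hlam
  have T2 : Tendsto (fun t : ℝ => t ^ (1 - α) * Real.exp (-lam * t) * L t) atTop (nhds 0) := by
    apply tendsto_of_tendsto_of_tendsto_of_le_of_le'
      (g := fun _ : ℝ => (0:ℝ))
      (h := fun t : ℝ => t ^ (1 - α) * Real.exp (-(lam / 2) * t) * (1 / (1 - α))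
        + t⁻¹ * (2:ℝ) ^ (2 - α) / lam)
    · exact tendsto_const_nhds
    · have A := (tendsto_rpow_mul_exp_neg_mul_atTop_nhds_zero (1 - α) (lam / 2)
        (by positivity)).mul_const (1 / (1 - α))
      have B := (tendsto_inv_atTop_zero : Tendsto (fun x : ℝ => x⁻¹) atTop (nhds 0)).mul_const
        ((2:ℝ) ^ (2 - α))
      have := (A.add (B.div_const lam))
      simpa using this
    · filter_upwards [eventually_ge_atTop (2:ℝ)] with t ht
      have ht1 : (1:ℝ) ≤ t := by linarith
      have hL0 : 0 ≤ L t := intervalIntegral.integral_nonneg ht1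
        (fun u hu => mul_nonneg (Real.exp_pos _).le (Real.rpow_nonneg (by linarith [hu.1]) _))
      positivity
    · filter_upwards [eventually_ge_atTop (2:ℝ)] with t ht
      have ht0 : (0:ℝ) < t := by linarith
      have ht2 : (1:ℝ) ≤ t / 2 := by linarith
      have ht1 : (1:ℝ) ≤ t := by linarith
      have htt : t / 2 ≤ t := by linarith
      have ht20 : (0:ℝ) < t / 2 := by linarith
      -- split L
      have hsplit : L t = (∫ u in (1:ℝ)..(t/2), Real.exp (lam * u) * u ^ (α - 2))
          + ∫ u in (t/2)..t, Real.exp (lam * u) * u ^ (α - 2) :=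
        (intervalIntegral.integral_add_adjacent_intervals
          (my_int lam (α - 2) one_pos ht2) (my_int lam (α - 2) ht20 htt)).symm
      have hnot : (0:ℝ) ∉ Set.uIcc (1:ℝ) (t/2) := by
        rw [Set.uIcc_of_le ht2]
        intro h; linarith [h.1]
      have hL1 : (∫ u in (1:ℝ)..(t/2), Real.exp (lam * u) * u ^ (α - 2))
          ≤ Real.exp (lam * (t / 2)) * (1 / (1 - α)) := by
        have hintg : IntervalIntegrable (fun u : ℝ => Real.exp (lam * (t/2)) * u ^ (α - 2))
            volume 1 (t/2) :=
          (intervalIntegral.intervalIntegrable_rpow (Or.inr hnot)).const_mul _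
        have hmono := intervalIntegral.integral_mono_on (μ := volume)
          (f := fun u : ℝ => Real.exp (lam * u) * u ^ (α - 2))
          (g := fun u : ℝ => Real.exp (lam * (t / 2)) * u ^ (α - 2)) ht2
          (my_int lam (α - 2) one_pos ht2) hintg
          (fun u hu => by
            apply mul_le_mul_of_nonneg_right _ (Real.rpow_nonneg (by linarith [hu.1]) _)
            exact Real.exp_le_exp.2 (mul_le_mul_of_nonneg_left hu.2 hlam.le))
        have hval : (∫ u in (1:ℝ)..(t/2), Real.exp (lam * (t / 2)) * u ^ (α - 2))
            = Real.exp (lam * (t / 2)) * (((t/2) ^ (α - 1) - 1) / (α - 1)) := by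
          rw [intervalIntegral.integral_const_mul,
            integral_rpow (Or.inr ⟨by intro h; linarith, hnot⟩)]
          rw [Real.one_rpow, show α - 2 + 1 = α - 1 by ring]
        have hx0 : 0 ≤ (t/2) ^ (α - 1) := Real.rpow_nonneg ht20.le _
        have hx1 : (t/2) ^ (α - 1) ≤ 1 :=
          Real.rpow_le_one_of_one_le_of_nonpos ht2 (by linarith)
        have hcc : ((t/2) ^ (α - 1) - 1) / (α - 1) ≤ 1 / (1 - α) := by
          have heq : ((t/2) ^ (α - 1) - 1) / (α - 1) = (1 - (t/2) ^ (α - 1)) / (1 - α) := by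
            rw [div_eq_div_iff (by linarith : α - 1 ≠ 0) (by linarith : 1 - α ≠ 0)]; ring
          rw [heq, div_le_div_iff₀ (by linarith : (0:ℝ) < 1 - α) (by linarith : (0:ℝ) < 1 - α)]
          nlinarith
        calc (∫ u in (1:ℝ)..(t/2), Real.exp (lam * u) * u ^ (α - 2))
            ≤ ∫ u in (1:ℝ)..(t/2), Real.exp (lam * (t / 2)) * u ^ (α - 2) := hmono
          _ = Real.exp (lam * (t / 2)) * (((t/2) ^ (α - 1) - 1) / (α - 1)) := hval
          _ ≤ Real.exp (lam * (t / 2)) * (1 / (1 - α)) :=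
              mul_le_mul_of_nonneg_left hcc (Real.exp_pos _).le
      have hL2 : (∫ u in (t/2)..t, Real.exp (lam * u) * u ^ (α - 2))
          ≤ (t/2) ^ (α - 2) * (Real.exp (lam * t) / lam) := by
        have hintg : IntervalIntegrable (fun u : ℝ => Real.exp (lam * u) * (t/2) ^ (α - 2))
            volume (t/2) t :=
          ((Real.continuous_exp.comp (continuous_const.mul continuous_id)).mul
            continuous_const).intervalIntegrable _ _
        have hmono := intervalIntegral.integral_mono_on (μ := volume)
          (f := fun u : ℝ => Real.exp (lam * u) * u ^ (α - 2))
          (g := fun u : ℝ => Real.exp (lam * u) * (t/2) ^ (α - 2)) htt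
          (my_int lam (α - 2) ht20 htt) hintg
          (fun u hu => by
            apply mul_le_mul_of_nonneg_left _ (Real.exp_pos _).le
            exact Real.rpow_le_rpow_of_nonpos ht20 hu.1 (by linarith))
        have hdiv : (Real.exp (lam * t) - Real.exp (lam * (t/2))) / lam
            ≤ Real.exp (lam * t) / lam := by
          rw [div_le_div_iff₀ hlam hlam]
          nlinarith [Real.exp_pos (lam * (t/2)), hlam]
        calc (∫ u in (t/2)..t, Real.exp (lam * u) * u ^ (α - 2))
            ≤ ∫ u in (t/2)..t, Real.exp (lam * u) * (t/2) ^ (α - 2) := hmono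
          _ = ((Real.exp (lam * t) - Real.exp (lam * (t/2))) / lam) * (t/2) ^ (α - 2) := by
              rw [intervalIntegral.integral_mul_const, my_expint lam hlam]
          _ ≤ (Real.exp (lam * t) / lam) * (t/2) ^ (α - 2) :=
              mul_le_mul_of_nonneg_right hdiv (Real.rpow_nonneg ht20.le _)
          _ = (t/2) ^ (α - 2) * (Real.exp (lam * t) / lam) := by ring
      have hR0 : 0 ≤ t ^ (1 - α) * Real.exp (-lam * t) := by positivity
      have e1 : Real.exp (-lam * t) * Real.exp (lam * (t/2)) = Real.exp (-(lam / 2) * t) := by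
        rw [← Real.exp_add]; ring_nf
      have e2 : Real.exp (-lam * t) * Real.exp (lam * t) = 1 := by
        rw [← Real.exp_add, neg_mul, neg_add_cancel, Real.exp_zero]
      have e3 : t ^ (1 - α) * (t/2) ^ (α - 2) = t⁻¹ * (2:ℝ) ^ (2 - α) := by
        rw [Real.div_rpow ht0.le (by norm_num : (0:ℝ) ≤ 2)]
        rw [div_eq_mul_inv, ← mul_assoc, ← Real.rpow_add ht0]
        have h4 : ((2:ℝ) ^ (α - 2))⁻¹ = (2:ℝ) ^ (2 - α) := by
          rw [← Real.rpow_neg (by norm_num : (0:ℝ) ≤ 2)]; norm_num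
        rw [h4, show (1 - α + (α - 2)) = (-1 : ℝ) by ring, Real.rpow_neg_one]
      calc t ^ (1 - α) * Real.exp (-lam * t) * L t
          ≤ t ^ (1 - α) * Real.exp (-lam * t)
            * (Real.exp (lam * (t / 2)) * (1 / (1 - α))
              + (t/2) ^ (α - 2) * (Real.exp (lam * t) / lam)) := by
            apply mul_le_mul_of_nonneg_left _ hR0
            rw [hsplit]; exact add_le_add hL1 hL2
        _ = (Real.exp (-lam * t) * Real.exp (lam * (t/2))) * (t ^ (1 - α) * (1 / (1 - α)))
            + (t ^ (1 - α) * (t/2) ^ (α - 2)) * (Real.exp (-lam * t) * Real.exp (lam * t)) / lam := by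
            ring
        _ = t ^ (1 - α) * Real.exp (-(lam / 2) * t) * (1 / (1 - α))
            + t⁻¹ * (2:ℝ) ^ (2 - α) / lam := by
            rw [e1, e2, e3]; ring
  have hmain : Tendsto (fun t : ℝ => α / lam
      + (C - α * Real.exp lam / lam) * (t ^ (1 - α) * Real.exp (-lam * t))
      - (α * (α - 1) / lam) * (t ^ (1 - α) * Real.exp (-lam * t) * L t)) atTop (nhds (α / lam)) := by
    have := ((tendsto_const_nhds (x := α / lam) (f := atTop (α := ℝ))).add
      (T1.const_mul (C - α * Real.exp lam / lam))).sub (T2.const_mul (α * (α - 1) / lam))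
    simpa using this
  apply hmain.congr'
  filter_upwards [eventually_ge_atTop (2:ℝ)] with t ht
  have ht0 : (0:ℝ) < t := by linarith
  have ht1 : (1:ℝ) ≤ t := by linarith
  have ha : t ^ (α - 1) ≠ 0 := (Real.rpow_pos_of_pos ht0 _).ne'
  have hexpne : Real.exp (lam * t) ≠ 0 := (Real.exp_pos _).ne'
  have hp : t ^ α = t ^ (α - 1) * t := by
    rw [← Real.rpow_add_one ht0.ne' (α - 1)]; norm_num
  have hq : t ^ (1 - α) = (t ^ (α - 1))⁻¹ := by
    rw [show (1 - α) = -(α - 1) by ring, Real.rpow_neg ht0.le]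
  have hE : Real.exp (-lam * t) = (Real.exp (lam * t))⁻¹ := by
    rw [neg_mul, Real.exp_neg]
  have hIsplit : (∫ u in (0:ℝ)..t, Real.exp (lam * u) * u ^ α)
      = I1 + ∫ u in (1:ℝ)..t, Real.exp (lam * u) * u ^ α :=
    (intervalIntegral.integral_add_adjacent_intervals (my_int0 lam α hαl 1)
      (my_int lam α one_pos ht1)).symm
  have hibp1 := my_ibp lam α hlam ht1
  have hibp2 := my_ibp lam (α - 1) hlam ht1
  rw [show α - 1 - 1 = α - 2 by ring] at hibp2
  rw [hψ t ht0, hIsplit, hibp1, hibp2, hC, hp, hq, hE]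
  simp only [hL]
  field_simp
  ring


theorem stmt_13 (lam H : ℝ) (hlam : 0 < lam) (hH : H ∈ Set.Ioo (0:ℝ) 1) (hH2 : H ≠ 1/2)
    (α : ℝ) (hα : α = H - 1/2)
    (ψ : ℝ → ℝ)
    (hψ : ∀ t > (0:ℝ), ψ t = t ^ α - lam * Real.exp (-lam * t) * ∫ u in (0:ℝ)..t, Real.exp (lam * u) * u ^ α) :
    Tendsto (fun t => ψ t / t ^ α) (nhdsWithin 0 (Set.Ioi 0)) (nhds 1) ∧
    Tendsto (fun t => ψ t / t ^ (α - 1)) atTop (nhds (α / lam)) := by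
  have hαl : -1 < α := by rw [hα]; linarith [hH.1]
  have hαu : α < 1 := by rw [hα]; linarith [hH.2]
  exact ⟨my_part1 lam α hlam hαl hαu ψ hψ, my_part2 lam α hlam hαl hαu ψ hψ⟩
end

section
/- Let (E, d) be a normed space (or more generally a linear metric space with invariant metric), and let F : ℝ → E be a Borel-measurable map with separable range such that d(F(t+u), F(v+u)) = d(F(t), F(v)) for all t, u, v ∈ ℝ. Then F is continuous. -/
open MeasureTheory Set Filter Topology Pointwise

theorem stmt_15 {E : Type*} [NormedAddCommGroup E] [MeasurableSpace E] [BorelSpace E] (F : ℝ → E)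
    (hmeas : Measurable F)
    (hsep : TopologicalSpace.IsSeparable (Set.range F))
    (hstat : ∀ t u v : ℝ, dist (F (t + u)) (F (v + u)) = dist (F t) (F v)) :
    Continuous F := by
  -- reduce to continuity at 0 of h ↦ dist (F h) (F 0)
  have key : Tendsto (fun h : ℝ => dist (F h) (F 0)) (𝓝 0) (𝓝 0) := by
    rw [Metric.tendsto_nhds]
    intro ε hε
    obtain ⟨c, hc, hcd⟩ := hsep
    -- cover ℝ by preimages of balls of radius ε/2 around points of c
    have hcover : ∀ t : ℝ, ∃ x ∈ c, dist (F t) x < ε / 2 := by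
      intro t
      have : F t ∈ closure c := hcd ⟨t, rfl⟩
      exact Metric.mem_closure_iff.1 this (ε / 2) (by linarith)
    -- find one preimage with positive measure inside [0,1]
    have hpos : ∃ x ∈ c, 0 < volume (F ⁻¹' (Metric.ball x (ε / 2)) ∩ Icc (0:ℝ) 1) := by
      by_contra h
      push_neg at h
      have hnull : ∀ x ∈ c, volume (F ⁻¹' (Metric.ball x (ε / 2)) ∩ Icc (0:ℝ) 1) = 0 := by
        intro x hx
        exact le_antisymm (h x hx) zero_le
      have hsub : Icc (0:ℝ) 1 ⊆ ⋃ x ∈ c, F ⁻¹' (Metric.ball x (ε / 2)) ∩ Icc (0:ℝ) 1 := by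
        intro t ht
        obtain ⟨x, hx, hdx⟩ := hcover t
        exact Set.mem_biUnion hx ⟨Metric.mem_ball.2 hdx, ht⟩
      have : volume (Icc (0:ℝ) 1) = 0 := by
        refine measure_mono_null hsub ?_
        exact (measure_biUnion_null_iff hc).2 hnull
      simp [Real.volume_Icc] at this
    obtain ⟨x, hx, hApos⟩ := hpos
    set A := F ⁻¹' (Metric.ball x (ε / 2)) ∩ Icc (0:ℝ) 1 with hA
    have hAmeas : MeasurableSet A :=
      (hmeas measurableSet_ball).inter measurableSet_Icc
    have hnhds : A - A ∈ 𝓝 (0:ℝ) :=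
      MeasureTheory.Measure.sub_mem_nhds_zero_of_addHaar_pos volume A hAmeas hApos
    filter_upwards [hnhds] with h hh
    obtain ⟨a, ha, b, hb, hab⟩ := Set.mem_sub.1 hh
    have hda : dist (F a) x < ε / 2 := ha.1
    have hdb : dist (F b) x < ε / 2 := hb.1
    have hdist : dist (F h) (F 0) = dist (F a) (F b) := by
      have := hstat h b 0
      rw [zero_add] at this
      rw [← this]
      congr 1
      rw [← hab]; ring_nf
    rw [Real.dist_eq, sub_zero, abs_of_nonneg dist_nonneg]
    calc dist (F h) (F 0) = dist (F a) (F b) := hdist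
      _ ≤ dist (F a) x + dist x (F b) := dist_triangle _ _ _
      _ < ε / 2 + ε / 2 := by rw [dist_comm x (F b)]; exact add_lt_add hda hdb
      _ = ε := by ring
  -- conclude continuity
  rw [continuous_iff_continuousAt]
  intro t
  rw [ContinuousAt, Metric.tendsto_nhds]
  intro ε hε
  have := Metric.tendsto_nhds.1 key ε hε
  rw [Metric.eventually_nhds_iff] at this ⊢
  obtain ⟨δ, hδ, hball⟩ := this
  refine ⟨δ, hδ, fun {y} hy => ?_⟩
  have h1 : dist (F y) (F t) = dist (F (y - t)) (F 0) := by
    have := hstat (y - t) t 0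
    rw [zero_add, sub_add_cancel] at this
    exact this
    
  rw [h1]
  have : dist (y - t) 0 < δ := by
    rw [Real.dist_eq, sub_zero]
    rw [Real.dist_eq] at hy
    exact hy
  have hres := hball this
  simpa using hres
end

section
/- Let (V, ‖·‖) be a normed space and F : ℝ → V a continuous map satisfying ‖F(t+u) - F(v+u)‖ = ‖F(t) - F(v)‖ for all t, u, v ∈ ℝ. Then there exist α, β > 0 with ‖F(t)‖ ≤ α + β|t| for all t ∈ ℝ; specifically one may take β = ‖F(1) - F(0)‖ and α = sup_{s∈[0,1]} ‖F(s) - F(0)‖ + ‖F(0)‖. -/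
open Set Filter

theorem stmt_16 {V : Type*} [NormedAddCommGroup V] (F : ℝ → V)
    (hcont : Continuous F)
    (hstat : ∀ t u v : ℝ, ‖F (t + u) - F (v + u)‖ = ‖F t - F v‖) :
    ∃ α β : ℝ, 0 < α ∧ 0 < β ∧ ∀ t : ℝ, ‖F t‖ ≤ α + β * |t| := by
  obtain ⟨C0, hC0⟩ : ∃ C, ∀ s ∈ Icc (0:ℝ) 1, ‖F s - F 0‖ ≤ C :=
    isCompact_Icc.exists_bound_of_continuousOn
      ((hcont.sub continuous_const).continuousOn)
  set C : ℝ := max C0 0 with hCdef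
  have hC : ∀ s ∈ Icc (0:ℝ) 1, ‖F s - F 0‖ ≤ C :=
    fun s hs => (hC0 s hs).trans (le_max_left _ _)
  have hCnn : 0 ≤ C := le_max_right _ _
  set b : ℝ := ‖F 1 - F 0‖ with hbdef
  have hbnn : 0 ≤ b := norm_nonneg _
  have key : ∀ n : ℕ, ∀ s ∈ Icc (0:ℝ) 1, ‖F (s + n) - F 0‖ ≤ C + n * b := by
    intro n
    induction n with
    | zero => intro s hs; simpa using hC s hs
    | succ n ih =>
      intro s hs
      have h1 : ‖F (s + (n + 1 : ℕ)) - F (s + n)‖ = b := by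
        have h := hstat 1 (s + n) 0
        have e1 : (s + ((n : ℝ) + 1)) = 1 + (s + n) := by ring
        have e2 : (s + (n : ℝ)) = 0 + (s + n) := by ring
        push_cast
        rw [e1]
        nth_rewrite 2 [e2]
        exact h
      calc ‖F (s + (n + 1 : ℕ)) - F 0‖
          ≤ ‖F (s + (n + 1 : ℕ)) - F (s + n)‖ + ‖F (s + n) - F 0‖ :=
            norm_sub_le_norm_sub_add_norm_sub _ _ _
        _ ≤ b + (C + n * b) := by rw [h1]; linarith [ih s hs]
        _ = C + (n + 1 : ℕ) * b := by push_cast; ring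
  have main : ∀ t : ℝ, 0 ≤ t → ‖F t - F 0‖ ≤ C + (b + 1) * |t| := by
    intro t ht
    set n : ℕ := ⌊t⌋₊ with hn
    have hnle : (n : ℝ) ≤ t := Nat.floor_le ht
    have hlt : t < n + 1 := Nat.lt_floor_add_one t
    have hs : t - n ∈ Icc (0:ℝ) 1 := ⟨by linarith, by linarith⟩
    have := key n (t - n) hs
    have habs : |t| = t := abs_of_nonneg ht
    have hmul : (n : ℝ) * b ≤ (b + 1) * |t| := by
      rw [habs]
      nlinarith [hnle, hbnn, Nat.cast_nonneg (α := ℝ) n]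
    have : ‖F t - F 0‖ ≤ C + n * b := by simpa using this
    linarith
  refine ⟨C + ‖F 0‖ + 1, b + 1, by positivity, by positivity, fun t => ?_⟩
  have hsym : ‖F t - F 0‖ ≤ C + (b + 1) * |t| := by
    rcases le_or_gt 0 t with ht | ht
    · exact main t ht
    · have h := hstat t (-t) 0
      have e : ‖F 0 - F (-t)‖ = ‖F t - F 0‖ := by simpa using h
      have e2 : ‖F (-t) - F 0‖ = ‖F t - F 0‖ := by rw [← e, norm_sub_rev]
      have := main (-t) (by linarith)
      rw [e2, abs_neg] at this
      exact this
  calc ‖F t‖ ≤ ‖F t - F 0‖ + ‖F 0‖ := by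
        simpa using norm_add_le (F t - F 0) (F 0)
    _ ≤ C + ‖F 0‖ + 1 + (b + 1) * |t| := by linarith
end

section
/- Fix λ > 0, H ∈ (0,1) with H ≠ 1/2, and set V(t) = t^{2H}. Then with R(t) = (e^{-λ t}/(4λ)) ∫_1^t e^{λ u} V''(u) du + (e^{λ t}/(4λ)) ∫_t^∞ e^{-λ u} V''(u) du, one has R(t) / t^{2H-2} → H(2H-1)/λ² as t → ∞. -/
open MeasureTheory Real Set Filter

open MeasureTheory Real Set Filter

lemma contOnAux (c β : ℝ) : ContinuousOn (fun u : ℝ => Real.exp (c*u) * u^β) {u : ℝ | 0 < u} := by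
  intro x hx
  exact ((Real.continuous_exp.comp (continuous_const.mul continuous_id)).continuousAt.mul
    (Real.continuousAt_rpow_const x β (Or.inl (ne_of_gt hx)))).continuousWithinAt

lemma intOnAux (lam β t : ℝ) (hlam : 0 < lam) (hβ : β ≤ 0) (ht : 1 ≤ t) :
    IntegrableOn (fun u : ℝ => Real.exp (-lam*u) * u^β) (Ioi t) := by
  apply Integrable.mono (exp_neg_integrableOn_Ioi t hlam)
  · exact ((contOnAux (-lam) β).mono
      (fun u hu => lt_of_lt_of_le one_pos (ht.trans (le_of_lt hu)))).aestronglyMeasurable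
      measurableSet_Ioi
  · filter_upwards [ae_restrict_mem measurableSet_Ioi] with u hu
    have hu1 : (1:ℝ) ≤ u := ht.trans hu.le
    rw [Real.norm_eq_abs, Real.norm_eq_abs,
      abs_of_nonneg (mul_nonneg (Real.exp_pos _).le (Real.rpow_nonneg (by linarith) β)),
      abs_of_nonneg (Real.exp_pos _).le]
    exact mul_le_of_le_one_right (Real.exp_pos _).le
      (Real.rpow_le_one_of_one_le_of_nonpos hu1 hβ)

lemma intvIntAux (c β a b : ℝ) (ha : 0 < a) (hb : 0 < b) :
    IntervalIntegrable (fun u : ℝ => Real.exp (c*u) * u^β) volume a b :=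
  ((contOnAux c β).mono (fun u hu => lt_of_lt_of_le (lt_min ha hb) hu.1)).intervalIntegrable

lemma expNegTendsto (lam : ℝ) (hlam : 0 < lam) :
    Tendsto (fun u : ℝ => Real.exp (-lam*u)) atTop (nhds 0) := by
  simp only [neg_mul]
  exact Real.tendsto_exp_atBot.comp
    (tendsto_neg_atBot_iff.mpr (tendsto_id.const_mul_atTop hlam))

lemma intExpIoi (lam t : ℝ) (hlam : 0 < lam) :
    ∫ u in Ioi t, Real.exp (-lam*u) = Real.exp (-lam*t) / lam := by
  have h := integral_Ioi_of_hasDerivAt_of_tendsto' (f := fun u : ℝ => -Real.exp (-lam*u)/lam)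
    (f' := fun u : ℝ => Real.exp (-lam*u)) (a := t) (m := 0) ?_
    (exp_neg_integrableOn_Ioi t hlam) ?_
  · rw [h]; ring
  · intro x _
    have h1 : HasDerivAt (fun u : ℝ => -Real.exp (-lam*u)/lam)
        (-(Real.exp (-lam*x) * (-lam * 1))/lam) x :=
      (((hasDerivAt_id x).const_mul (-lam)).exp.neg).div_const lam
    refine h1.congr_deriv ?_
    field_simp
  · simpa [neg_div] using ((expNegTendsto lam hlam).div_const lam).neg

lemma lemB (lam α : ℝ) (hlam : 0 < lam) (hα : α < 0) :
    Tendsto (fun t => Real.exp (lam*t) * (∫ u in Ioi t, Real.exp (-lam*u) * u^α) / t^α)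
      atTop (nhds (1/lam)) := by
  have key : ∀ t : ℝ, 1 ≤ t →
      (∫ u in Ioi t, Real.exp (-lam*u) * u^α)
        = Real.exp (-lam*t) * t^α / lam
          + (α/lam) * ∫ u in Ioi t, Real.exp (-lam*u) * u^(α-1) := by
    intro t ht
    have h0t : (0:ℝ) < t := lt_of_lt_of_le one_pos ht
    have hint1 := intOnAux lam α t hlam hα.le ht
    have hint2 := intOnAux lam (α-1) t hlam (by linarith) ht
    have h := integral_Ioi_of_hasDerivAt_of_tendsto'
      (f := fun u : ℝ => -(Real.exp (-lam*u) * u^α)/lam)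
      (f' := fun u : ℝ => Real.exp (-lam*u) * u^α - (α/lam) * (Real.exp (-lam*u) * u^(α-1)))
      (a := t) (m := 0) ?_ ?_ ?_
    · rw [integral_sub hint1 (hint2.const_mul _), integral_const_mul] at h
      simp only [zero_sub, neg_div, neg_neg] at h
      linarith
    · intro x hx
      have hx0 : (0:ℝ) < x := lt_of_lt_of_le h0t hx
      have h1 : HasDerivAt (fun u : ℝ => Real.exp (-lam*u)) (Real.exp (-lam*x) * (-lam*1)) x :=
        ((hasDerivAt_id x).const_mul (-lam)).exp
      have h2 : HasDerivAt (fun u : ℝ => u^α) (α * x^(α-1)) x :=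
        Real.hasDerivAt_rpow_const (Or.inl hx0.ne')
      have h3 := ((h1.mul h2).neg).div_const lam
      refine h3.congr_deriv ?_
      field_simp
      ring
    · exact hint1.sub (hint2.const_mul _)
    · have h4 := ((tendsto_rpow_mul_exp_neg_mul_atTop_nhds_zero α lam hlam).neg).div_const lam
      simp only [neg_zero, zero_div] at h4
      refine h4.congr (fun u => ?_)
      rw [neg_div, neg_div]
      ring_nf
  have hK0 : ∀ t : ℝ, 1 ≤ t →
      0 ≤ ∫ u in Ioi t, Real.exp (-lam*u) * u^(α-1) := by
    intro t ht
    refine setIntegral_nonneg measurableSet_Ioi (fun u hu => ?_)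
    exact mul_nonneg (Real.exp_pos _).le
      (Real.rpow_nonneg (le_of_lt (lt_of_lt_of_le (lt_of_lt_of_le one_pos ht) (le_of_lt hu))) _)
  have hKle : ∀ t : ℝ, 1 ≤ t →
      (∫ u in Ioi t, Real.exp (-lam*u) * u^(α-1)) ≤ t^(α-1) * Real.exp (-lam*t)/lam := by
    intro t ht
    have h0t : (0:ℝ) < t := lt_of_lt_of_le one_pos ht
    have step : (∫ u in Ioi t, Real.exp (-lam*u) * u^(α-1))
        ≤ ∫ u in Ioi t, Real.exp (-lam*u) * t^(α-1) := by
      refine setIntegral_mono_on (intOnAux lam (α-1) t hlam (by linarith) ht)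
        ((exp_neg_integrableOn_Ioi t hlam).mul_const _) measurableSet_Ioi (fun u hu => ?_)
      exact mul_le_mul_of_nonneg_left
        (Real.rpow_le_rpow_of_nonpos h0t (le_of_lt hu) (by linarith)) (Real.exp_pos _).le
    calc (∫ u in Ioi t, Real.exp (-lam*u) * u^(α-1))
        ≤ ∫ u in Ioi t, Real.exp (-lam*u) * t^(α-1) := step
      _ = (∫ u in Ioi t, Real.exp (-lam*u)) * t^(α-1) := by rw [integral_mul_const]
      _ = t^(α-1) * Real.exp (-lam*t)/lam := by rw [intExpIoi lam t hlam]; ring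
  set K : ℝ → ℝ := fun t => ∫ u in Ioi t, Real.exp (-lam*u) * u^(α-1) with hKdef
  have hG : Tendsto (fun t => Real.exp (lam*t) * K t / t^α) atTop (nhds 0) := by
    have hub : Tendsto (fun t : ℝ => 1/(lam*t)) atTop (nhds 0) :=
      Tendsto.div_atTop tendsto_const_nhds (tendsto_id.const_mul_atTop hlam)
    refine tendsto_of_tendsto_of_tendsto_of_le_of_le' tendsto_const_nhds hub ?_ ?_
    · filter_upwards [eventually_ge_atTop (1:ℝ)] with t ht
      have h0t : (0:ℝ) < t := lt_of_lt_of_le one_pos ht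
      exact div_nonneg (mul_nonneg (Real.exp_pos _).le (hK0 t ht))
        (Real.rpow_pos_of_pos h0t α).le
    · filter_upwards [eventually_ge_atTop (1:ℝ)] with t ht
      have h0t : (0:ℝ) < t := lt_of_lt_of_le one_pos ht
      have htα : t^α ≠ 0 := (Real.rpow_pos_of_pos h0t α).ne'
      have hexp : Real.exp (lam*t) * Real.exp (-lam*t) = 1 := by
        rw [← Real.exp_add]
        norm_num
      have step : Real.exp (lam*t) * K t / t^α
          ≤ Real.exp (lam*t) * (t^(α-1) * Real.exp (-lam*t)/lam) / t^α := by
        gcongr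
        exact hKle t ht
      refine step.trans (le_of_eq ?_)
      have hsub : t^(α-1) = t^α/t := by rw [Real.rpow_sub h0t, Real.rpow_one]
      calc Real.exp (lam*t) * (t^(α-1) * Real.exp (-lam*t)/lam) / t^α
          = (Real.exp (lam*t) * Real.exp (-lam*t)) * (t^α/t^α) / (lam*t) := by
            rw [hsub]; ring
        _ = 1/(lam*t) := by rw [hexp, div_self htα]; ring
  have hfinal : Tendsto (fun t : ℝ => 1/lam + (α/lam) * (Real.exp (lam*t) * K t / t^α))
      atTop (nhds (1/lam + (α/lam)*0)) := tendsto_const_nhds.add (hG.const_mul (α/lam))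
  rw [mul_zero, add_zero] at hfinal
  refine Tendsto.congr' ?_ hfinal
  filter_upwards [eventually_ge_atTop (1:ℝ)] with t ht
  have h0t : (0:ℝ) < t := lt_of_lt_of_le one_pos ht
  have htα : t^α ≠ 0 := (Real.rpow_pos_of_pos h0t α).ne'
  have hexp : Real.exp (lam*t) * Real.exp (-lam*t) = 1 := by
    rw [← Real.exp_add]; norm_num
  rw [key t ht]
  calc (1:ℝ)/lam + (α/lam) * (Real.exp (lam*t) * K t / t^α)
      = Real.exp (lam*t) * (Real.exp (-lam*t) * t^α / lam + (α/lam) * K t) / t^α := by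
        rw [show Real.exp (lam*t) * (Real.exp (-lam*t) * t^α / lam + (α/lam) * K t) / t^α
          = (Real.exp (lam*t) * Real.exp (-lam*t)) * (t^α/t^α) / lam
            + (α/lam) * (Real.exp (lam*t) * K t / t^α) from by ring,
          hexp, div_self htα]
        ring

lemma intvExp (lam a b : ℝ) (hlam : lam ≠ 0) :
    ∫ u in a..b, Real.exp (lam*u) = Real.exp (lam*b)/lam - Real.exp (lam*a)/lam := by
  have hd : ∀ x : ℝ, HasDerivAt (fun u : ℝ => Real.exp (lam*u)/lam) (Real.exp (lam*x)) x := by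
    intro x
    have := (((hasDerivAt_id x).const_mul lam).exp).div_const lam
    refine this.congr_deriv ?_
    field_simp
    rfl
  rw [intervalIntegral.integral_eq_sub_of_hasDerivAt (fun x _ => hd x)
    ((Real.continuous_exp.comp (continuous_const.mul continuous_id)).intervalIntegrable a b)]

lemma lemA (lam α : ℝ) (hlam : 0 < lam) (hα : α < 0) :
    Tendsto (fun t => Real.exp (-lam*t) * (∫ u in (1:ℝ)..t, Real.exp (lam*u) * u^α) / t^α)
      atTop (nhds (1/lam)) := by
  have key : ∀ t : ℝ, 1 ≤ t →
      (∫ u in (1:ℝ)..t, Real.exp (lam*u) * u^α)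
        = Real.exp (lam*t) * t^α / lam - Real.exp lam/lam
          - (α/lam) * ∫ u in (1:ℝ)..t, Real.exp (lam*u) * u^(α-1) := by
    intro t ht
    have h0t : (0:ℝ) < t := lt_of_lt_of_le one_pos ht
    have hint1 := intvIntAux lam α 1 t one_pos h0t
    have hint2 := intvIntAux lam (α-1) 1 t one_pos h0t
    have h := intervalIntegral.integral_eq_sub_of_hasDerivAt
      (f := fun u : ℝ => Real.exp (lam*u) * u^α / lam)
      (f' := fun u : ℝ => Real.exp (lam*u) * u^α + (α/lam) * (Real.exp (lam*u) * u^(α-1)))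
      (a := 1) (b := t) ?_ (hint1.add (hint2.const_mul _))
    · rw [intervalIntegral.integral_add hint1 (hint2.const_mul _),
        intervalIntegral.integral_const_mul] at h
      simp only [Real.one_rpow, mul_one] at h
      linarith
    · intro x hx
      rw [uIcc_of_le ht] at hx
      have hx0 : (0:ℝ) < x := lt_of_lt_of_le one_pos hx.1
      have h1 : HasDerivAt (fun u : ℝ => Real.exp (lam*u)) (Real.exp (lam*x) * (lam*1)) x :=
        ((hasDerivAt_id x).const_mul lam).exp
      have h2 : HasDerivAt (fun u : ℝ => u^α) (α * x^(α-1)) x :=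
        Real.hasDerivAt_rpow_const (Or.inl hx0.ne')
      have h3 := (h1.mul h2).div_const lam
      refine h3.congr_deriv ?_
      field_simp
  set J : ℝ → ℝ := fun t => ∫ u in (1:ℝ)..t, Real.exp (lam*u) * u^(α-1) with hJdef
  have hJ0 : ∀ t : ℝ, 1 ≤ t → 0 ≤ J t := by
    intro t ht
    refine intervalIntegral.integral_nonneg ht (fun u hu => ?_)
    exact mul_nonneg (Real.exp_pos _).le (Real.rpow_nonneg (by linarith [hu.1]) _)
  have hJle : ∀ t : ℝ, 2 ≤ t →
      J t ≤ Real.exp (lam*(t/2))/lam + (t/2)^(α-1) * Real.exp (lam*t)/lam := by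
    intro t ht
    have h0t : (0:ℝ) < t := by linarith
    have h2t : (0:ℝ) < t/2 := by linarith
    have h12 : (1:ℝ) ≤ t/2 := by linarith
    have hi1 := intvIntAux lam (α-1) 1 (t/2) one_pos h2t
    have hi2 := intvIntAux lam (α-1) (t/2) t h2t h0t
    have hsplit : J t = (∫ u in (1:ℝ)..(t/2), Real.exp (lam*u) * u^(α-1))
        + ∫ u in (t/2)..t, Real.exp (lam*u) * u^(α-1) :=
      (intervalIntegral.integral_add_adjacent_intervals hi1 hi2).symm
    have hb1 : (∫ u in (1:ℝ)..(t/2), Real.exp (lam*u) * u^(α-1))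
        ≤ Real.exp (lam*(t/2))/lam := by
      have mono : (∫ u in (1:ℝ)..(t/2), Real.exp (lam*u) * u^(α-1))
          ≤ ∫ u in (1:ℝ)..(t/2), Real.exp (lam*u) := by
        refine intervalIntegral.integral_mono_on h12 hi1
          ((Real.continuous_exp.comp (continuous_const.mul continuous_id)).intervalIntegrable _ _)
          (fun u hu => ?_)
        exact mul_le_of_le_one_right (Real.exp_pos _).le
          (Real.rpow_le_one_of_one_le_of_nonpos hu.1 (by linarith))
      rw [intvExp lam 1 (t/2) hlam.ne'] at mono
      have : Real.exp (lam*1)/lam > 0 := by positivity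
      linarith
    have hb2 : (∫ u in (t/2)..t, Real.exp (lam*u) * u^(α-1))
        ≤ (t/2)^(α-1) * Real.exp (lam*t)/lam := by
      have mono : (∫ u in (t/2)..t, Real.exp (lam*u) * u^(α-1))
          ≤ ∫ u in (t/2)..t, Real.exp (lam*u) * (t/2)^(α-1) := by
        refine intervalIntegral.integral_mono_on (by linarith) hi2
          (((Real.continuous_exp.comp (continuous_const.mul continuous_id)).mul
            continuous_const).intervalIntegrable _ _) (fun u hu => ?_)
        exact mul_le_mul_of_nonneg_left
          (Real.rpow_le_rpow_of_nonpos h2t hu.1 (by linarith)) (Real.exp_pos _).le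
      rw [intervalIntegral.integral_mul_const, intvExp lam (t/2) t hlam.ne'] at mono
      have h1 : (0:ℝ) ≤ (t/2)^(α-1) := Real.rpow_nonneg h2t.le _
      have h2 : (0:ℝ) < Real.exp (lam*(t/2))/lam := by positivity
      calc (∫ u in (t/2)..t, Real.exp (lam*u) * u^(α-1))
          ≤ (Real.exp (lam*t)/lam - Real.exp (lam*(t/2))/lam) * (t/2)^(α-1) := mono
        _ ≤ (Real.exp (lam*t)/lam) * (t/2)^(α-1) :=
            mul_le_mul_of_nonneg_right (sub_le_self _ h2.le) h1
        _ = (t/2)^(α-1) * Real.exp (lam*t)/lam := by ring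
    linarith
  have hE : Tendsto (fun t => Real.exp (-lam*t) * J t / t^α) atTop (nhds 0) := by
    have hub : Tendsto (fun t : ℝ => t^(-α) * Real.exp (-(lam/2)*t)/lam + 2^(1-α)/(lam*t))
        atTop (nhds (0/lam + 0)) := by
      refine Tendsto.add ((tendsto_rpow_mul_exp_neg_mul_atTop_nhds_zero (-α) (lam/2)
        (by positivity)).div_const lam) ?_
      exact Tendsto.div_atTop tendsto_const_nhds (tendsto_id.const_mul_atTop hlam)
    rw [zero_div, add_zero] at hub
    refine tendsto_of_tendsto_of_tendsto_of_le_of_le' tendsto_const_nhds hub ?_ ?_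
    · filter_upwards [eventually_ge_atTop (1:ℝ)] with t ht
      have h0t : (0:ℝ) < t := lt_of_lt_of_le one_pos ht
      exact div_nonneg (mul_nonneg (Real.exp_pos _).le (hJ0 t ht))
        (Real.rpow_pos_of_pos h0t α).le
    · filter_upwards [eventually_ge_atTop (2:ℝ)] with t ht
      have h0t : (0:ℝ) < t := by linarith
      have h2t : (0:ℝ) < t/2 := by linarith
      have htα : t^α ≠ 0 := (Real.rpow_pos_of_pos h0t α).ne'
      have step : Real.exp (-lam*t) * J t / t^α
          ≤ Real.exp (-lam*t) * (Real.exp (lam*(t/2))/lam + (t/2)^(α-1) * Real.exp (lam*t)/lam) / t^α := by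
        gcongr
        exact hJle t ht
      refine step.trans (le_of_eq ?_)
      have hE1 : Real.exp (-lam*t) ≠ 0 := Real.exp_ne_zero _
      have hE2 : Real.exp (lam*(t/2)) = Real.exp (-(lam/2)*t)/Real.exp (-lam*t) := by
        rw [eq_div_iff hE1, ← Real.exp_add]
        congr 1
        ring
      have hE3 : Real.exp (lam*t) = 1/Real.exp (-lam*t) := by
        rw [eq_div_iff hE1, ← Real.exp_add]
        norm_num
      have half : (t/2)^(α-1) = t^(α-1)/2^(α-1) :=
        Real.div_rpow h0t.le (by norm_num) _
      have tm1 : t^(α-1) = t^α/t := by rw [Real.rpow_sub h0t, Real.rpow_one]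
      have tneg : t^(-α) = (t^α)⁻¹ := by rw [Real.rpow_neg h0t.le]
      have onem : (2:ℝ)^(1-α) = ((2:ℝ)^(α-1))⁻¹ := by
        rw [show (1:ℝ)-α = -(α-1) by ring, Real.rpow_neg (by norm_num)]
      have hY : ((2:ℝ)^(α-1)) ≠ 0 := (Real.rpow_pos_of_pos (by norm_num) _).ne'
      rw [hE2, hE3, half, tm1, tneg, onem]
      field_simp
  have T2 : Tendsto (fun t : ℝ => Real.exp (-lam*t)/t^α) atTop (nhds 0) := by
    have h := tendsto_rpow_mul_exp_neg_mul_atTop_nhds_zero (-α) lam hlam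
    refine h.congr' ?_
    filter_upwards [eventually_gt_atTop (0:ℝ)] with t h0t
    rw [Real.rpow_neg h0t.le]
    ring
  have hfinal : Tendsto (fun t : ℝ => 1/lam - (Real.exp lam/lam) * (Real.exp (-lam*t)/t^α)
      - (α/lam) * (Real.exp (-lam*t) * J t / t^α))
      atTop (nhds (1/lam - (Real.exp lam/lam) * 0 - (α/lam) * 0)) :=
    (tendsto_const_nhds.sub (T2.const_mul _)).sub (hE.const_mul _)
  rw [mul_zero, mul_zero, sub_zero, sub_zero] at hfinal
  refine Tendsto.congr' ?_ hfinal
  filter_upwards [eventually_ge_atTop (1:ℝ)] with t ht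
  have h0t : (0:ℝ) < t := lt_of_lt_of_le one_pos ht
  have htα : t^α ≠ 0 := (Real.rpow_pos_of_pos h0t α).ne'
  have hE1 : Real.exp (-lam*t) ≠ 0 := Real.exp_ne_zero _
  have hE3 : Real.exp (lam*t) = 1/Real.exp (-lam*t) := by
    rw [eq_div_iff hE1, ← Real.exp_add]
    norm_num
  rw [key t ht, hE3]
  field_simp
  ring



theorem stmt_18 (lam H : ℝ) (hlam : 0 < lam) (hH : H ∈ Set.Ioo (0:ℝ) 1) (hH2 : H ≠ 1/2)
    (R : ℝ → ℝ)
    (hR : ∀ t : ℝ,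
      R t = (Real.exp (-lam * t) / (4 * lam)) *
              (∫ u in (1:ℝ)..t, Real.exp (lam * u) * (2 * H * (2 * H - 1) * u ^ (2 * H - 2)))
          + (Real.exp (lam * t) / (4 * lam)) *
              ∫ u in Set.Ioi t, Real.exp (-lam * u) * (2 * H * (2 * H - 1) * u ^ (2 * H - 2))) :
    Tendsto (fun t => R t / t ^ (2 * H - 2)) atTop (nhds (H * (2 * H - 1) / lam ^ 2)) := by
  obtain ⟨hH0, hH1⟩ := hH
  have hα : 2 * H - 2 < 0 := by linarith
  have hrw : ∀ t : ℝ, R t / t ^ (2 * H - 2)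
      = (2 * H * (2 * H - 1)/(4 * lam)) *
          (Real.exp (-lam * t) * (∫ u in (1:ℝ)..t, Real.exp (lam * u) * u ^ (2 * H - 2)) / t ^ (2 * H - 2))
      + (2 * H * (2 * H - 1)/(4 * lam)) *
          (Real.exp (lam * t) * (∫ u in Ioi t, Real.exp (-lam * u) * u ^ (2 * H - 2)) / t ^ (2 * H - 2)) := by
    intro t
    rw [hR t]
    have h1 : (∫ u in (1:ℝ)..t, Real.exp (lam * u) * (2 * H * (2 * H - 1) * u ^ (2 * H - 2)))
        = 2 * H * (2 * H - 1) * ∫ u in (1:ℝ)..t, Real.exp (lam * u) * u ^ (2 * H - 2) := by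
      rw [← intervalIntegral.integral_const_mul]
      apply intervalIntegral.integral_congr
      intro u _
      simp only []
      rw [mul_left_comm]
    have h2 : (∫ u in Ioi t, Real.exp (-lam * u) * (2 * H * (2 * H - 1) * u ^ (2 * H - 2)))
        = 2 * H * (2 * H - 1) * ∫ u in Ioi t, Real.exp (-lam * u) * u ^ (2 * H - 2) := by
      rw [← integral_const_mul]
      congr 1
      funext u
      rw [mul_left_comm]
    rw [h1, h2]
    ring
  have hA := lemA lam (2 * H - 2) hlam hα
  have hB := lemB lam (2 * H - 2) hlam hα
  have hsum := (hA.const_mul (2 * H * (2 * H - 1)/(4 * lam))).add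
    (hB.const_mul (2 * H * (2 * H - 1)/(4 * lam)))
  have hlim : (2 * H * (2 * H - 1)/(4 * lam)) * (1/lam) + (2 * H * (2 * H - 1)/(4 * lam)) * (1/lam)
      = H * (2 * H - 1) / lam ^ 2 := by
    field_simp
    ring
  rw [hlim] at hsum
  exact hsum.congr (fun t => (hrw t).symm)
end
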